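/- arXiv:1112.4351 — 4 statements merged into one kernel-verified Lean document; each statement's English description precedes it below -/
import Mathlib

section
/- Lemma 3.3 (difference representation): Let V_t(y,x), t = 0,...,T, be any set of approximations to the value function with V_T(y,x) = sup_{h∈K_T(y,x)} H_T(h,x), and define the dual upper estimate V^↑_t using the martingale generated by V (Doob decomposition increments M^y_{t+1} - M^y_t = V_{t+1}(y, X_{t+1}) - E_t[V_{t+1}(y, X_{t+1})]). Then V^↑_t(y,x) - V_t(y,x) = E[ sup over admissible policies π ∈ P_{K,y,t} of Σ_{s=t}^{T-1} ( H_s(h_s, X_s) + E_s[V_{s+1}(y_{s+1}, X_{s+1})] - V_s(y_s, X_s) ) | X_t = x ]. -/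
open MeasureTheory Finset

section Setup

variable {Ω : Type*}

/-- Control value at time `t`, starting from `y0` at time `t0`:
`y_t = y0 - ∑_{t0 ≤ s < t} h_s`. -/
noncomputable def ctrl {E : Type*} [AddCommGroup E] (y0 : E) (h : ℕ → Ω → E)
    (t0 t : ℕ) (ω : Ω) : E :=
  y0 - ∑ s ∈ Finset.Ico t0 t, h s ω

/-- A `K`-admissible exercise policy on `{t0, …, T}` started at `y0`:
each `h_s` is `ℱ s`-measurable and a.s. `h_s(ω) ∈ K_s(y_s, X_s(ω))`. -/
def Admissible {E S : Type*} [AddCommGroup E] [MeasurableSpace E]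
    {m0 : MeasurableSpace Ω} (μ : Measure Ω) (ℱ : Filtration ℕ m0) (T : ℕ)
    (K : ℕ → E → S → Set E) (X : ℕ → Ω → S) (t0 : ℕ) (y0 : E)
    (h : ℕ → Ω → E) : Prop :=
  (∀ s, Measurable[ℱ s] (h s)) ∧
  (∀ᵐ ω ∂μ, ∀ s, t0 ≤ s → s ≤ T → h s ω ∈ K s (ctrl y0 h t0 s ω) (X s ω))

/-- The value of a policy at time `t0`:
`V^π_{t0} = E[∑_{s=t0}^T H_s(h_s, X_s) | ℱ_{t0}]`. -/
noncomputable def polValue {E S : Type*}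
    {m0 : MeasurableSpace Ω} (μ : Measure Ω) (ℱ : Filtration ℕ m0) (T : ℕ)
    (H : ℕ → E → S → ℝ) (X : ℕ → Ω → S) (t0 : ℕ)
    (h : ℕ → Ω → E) : Ω → ℝ :=
  μ[fun ω => ∑ s ∈ Finset.Icc t0 T, H s (h s ω) (X s ω) | ℱ t0]

/-- The value function `V^{K,*}_{t0}(y0)` as the supremum of policy values over
the `K`-admissible policies started at `y0` at time `t0`. -/
noncomputable def valueFn {E S : Type*} [AddCommGroup E] [MeasurableSpace E]
    {m0 : MeasurableSpace Ω} (μ : Measure Ω) (ℱ : Filtration ℕ m0) (T : ℕ)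
    (H : ℕ → E → S → ℝ) (K : ℕ → E → S → Set E) (X : ℕ → Ω → S)
    (t0 : ℕ) (y0 : E) : Ω → ℝ :=
  fun ω => ⨆ π : {h : ℕ → Ω → E // Admissible μ ℱ T K X t0 y0 h},
    polValue μ ℱ T H X t0 π.1 ω

end Setup

section Dual

variable {Ω : Type*}

/-- One-step conditional expectation of an approximation family:
`condV μ ℱ V X s y' = E[V_{s+1}(y', X_{s+1}) | ℱ s]`. -/
noncomputable def condV {m0 : MeasurableSpace Ω} (μ : Measure Ω)
    (ℱ : Filtration ℕ m0) {l d : ℕ}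
    (V : ℕ → (Fin l → ℝ) → (Fin d → ℝ) → ℝ) (X : ℕ → Ω → (Fin d → ℝ))
    (s : ℕ) (y' : Fin l → ℝ) : Ω → ℝ :=
  μ[fun ω => V (s + 1) y' (X (s + 1) ω) | ℱ s]

/-- The dual upper estimate `V^↑_t(y)` built from the approximation family `V`
via its Doob-decomposition martingale increments
`M^{y}_{s+1} - M^{y}_s = V_{s+1}(y, X_{s+1}) - E_s[V_{s+1}(y, X_{s+1})]`. -/
noncomputable def dualEstimate {m0 : MeasurableSpace Ω} (μ : Measure Ω)
    (ℱ : Filtration ℕ m0) {l d : ℕ} (T : ℕ)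
    (H : ℕ → (Fin l → ℝ) → (Fin d → ℝ) → ℝ)
    (K : ℕ → (Fin l → ℝ) → (Fin d → ℝ) → Set (Fin l → ℝ))
    (V : ℕ → (Fin l → ℝ) → (Fin d → ℝ) → ℝ) (X : ℕ → Ω → (Fin d → ℝ))
    (t : ℕ) (y : Fin l → ℝ) : Ω → ℝ :=
  μ[fun ω => ⨆ π : {h : ℕ → Ω → (Fin l → ℝ) // Admissible μ ℱ T K X t y h},
      ((∑ s ∈ Finset.Ico t T,
          (H s (π.1 s ω) (X s ω)
            - V (s + 1) (ctrl y π.1 t (s + 1) ω) (X (s + 1) ω)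
            + condV μ ℱ V X s (ctrl y π.1 t (s + 1) ω) ω))
        + H T (π.1 T ω) (X T ω)) | ℱ t]

end Dual

section Aux

variable {Ω : Type*} {m0 : MeasurableSpace Ω}

/-- Two points are equivalent if no measurable set separates them. -/
def mrel (m0 : MeasurableSpace Ω) (ω ω' : Ω) : Prop :=
  ∀ A : Set Ω, MeasurableSet[m0] A → (ω ∈ A ↔ ω' ∈ A)

lemma mrel_refl (ω : Ω) : mrel m0 ω ω := fun _ _ => Iff.rfl

lemma eq_of_mrel {α : Type*} [MeasurableSpace α] [MeasurableSingletonClass α]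
    {f : Ω → α} (hf : Measurable[m0] f) {ω ω' : Ω} (h : mrel m0 ω ω') :
    f ω = f ω' := by
  have := (h (f ⁻¹' {f ω}) (hf (measurableSet_singleton _))).mp rfl
  simpa [eq_comm] using this

lemma measurable_of_mrel [Fintype Ω] {f : Ω → ℝ}
    (hf : ∀ ω ω', mrel m0 ω ω' → f ω = f ω') : Measurable[m0] f := by
  classical
  have hset : ∀ ω : Ω, MeasurableSet[m0] {ω' | mrel m0 ω ω'} := by
    intro ω
    have hrepr : {ω' | mrel m0 ω ω'}
        = ⋂ (A : Set Ω) (_ : MeasurableSet[m0] A), (if ω ∈ A then A else Aᶜ) := by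
      ext ω'
      simp only [Set.mem_iInter, Set.mem_setOf_eq, mrel]
      constructor
      · intro h A hA
        by_cases hm : ω ∈ A
        · simpa [hm] using (h A hA).mp hm
        · simp only [hm, if_false, Set.mem_compl_iff]
          exact fun hc => hm ((h A hA).mpr hc)
      · intro h A hA
        have := h A hA
        by_cases hm : ω ∈ A
        · simp only [hm, if_true] at this; exact ⟨fun _ => this, fun _ => hm⟩
        · simp only [hm, if_false, Set.mem_compl_iff] at this
          exact ⟨fun hc => absurd hc hm, fun hc => absurd hc this⟩
    rw [hrepr]
    haveI : Countable (Set Ω) := Finite.to_countable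
    exact MeasurableSet.iInter fun A => MeasurableSet.iInter fun hA => by
      split <;> [exact hA; exact hA.compl]
  intro S _
  have hrepr : f ⁻¹' S = ⋃ ω ∈ f ⁻¹' S, {ω' | mrel m0 ω ω'} := by
    ext ω'
    constructor
    · intro h; exact Set.mem_biUnion h (mrel_refl ω')
    · rintro ⟨A, ⟨ω, rfl⟩, hA⟩
      simp only [Set.mem_iUnion, Set.mem_setOf_eq] at hA
      obtain ⟨hmem, hrel⟩ := hA
      simpa [Set.mem_preimage, ← hf ω ω' hrel] using hmem
  rw [hrepr]
  exact MeasurableSet.biUnion (Set.to_countable _) fun ω _ => hset ω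

lemma prop_of_ae {μ : Measure Ω} {P : Ω → Prop} (h : ∀ᵐ ω ∂μ, P ω) {ω : Ω}
    (hω : μ {ω} ≠ 0) : P ω := by
  by_contra hP
  refine hω (le_antisymm ?_ zero_le)
  calc μ {ω} ≤ μ {x | ¬ P x} := measure_mono (fun x hx => by
        rw [Set.mem_singleton_iff] at hx; subst hx; exact hP)
    _ = 0 := ae_iff.mp h

lemma ae_of_atoms [Fintype Ω] {μ : Measure Ω} {P : Ω → Prop}
    (h : ∀ ω, μ {ω} ≠ 0 → P ω) : ∀ᵐ ω ∂μ, P ω := by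
  rw [ae_iff]
  refine le_antisymm (le_trans (measure_mono
    (fun x hx => Set.mem_biUnion hx rfl : {x | ¬ P x} ⊆ ⋃ ω ∈ {x | ¬ P x}, {ω})) ?_)
    zero_le
  refine le_of_eq ((measure_biUnion_null_iff (Set.to_countable _)).2 ?_)
  intro ω hω
  by_contra hne
  exact hω (h ω hne)

lemma ciSup_add_const {ι : Sort*} [Nonempty ι] {f : ι → ℝ}
    (hb : BddAbove (Set.range f)) (c : ℝ) :
    (⨆ i, (f i + c)) = (⨆ i, f i) + c := by
  have hb' : BddAbove (Set.range fun i => f i + c) := by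
    obtain ⟨B, hB⟩ := hb
    exact ⟨B + c, by rintro x ⟨i, rfl⟩; exact add_le_add_left (hB ⟨i, rfl⟩) c⟩
  apply le_antisymm
  · exact ciSup_le fun i => add_le_add_left (le_ciSup hb i) c
  · rw [← le_sub_iff_add_le]
    exact ciSup_le fun i => le_sub_iff_add_le.mpr (le_ciSup hb' i)

lemma sum_telescope_Ico (f : ℕ → ℝ) {a b : ℕ} (h : a ≤ b) :
    ∑ s ∈ Finset.Ico a b, (f s - f (s + 1)) = f a - f b := by
  induction b, h using Nat.le_induction with
  | base => simp
  | succ b hb ih => rw [Finset.sum_Ico_succ_top hb, ih]; ring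

end Aux

/-- Lemma 3.3: difference representation between the dual upper
estimate and the a priori estimate. -/
theorem dual_difference_representation
    {Ω : Type*} [Fintype Ω] {m0 : MeasurableSpace Ω}
    (μ : Measure Ω) [IsProbabilityMeasure μ] (ℱ : Filtration ℕ m0)
    {l d : ℕ} (T : ℕ)
    (X : ℕ → Ω → (Fin d → ℝ)) (hX : ∀ t', Measurable[ℱ t'] (X t'))
    (H : ℕ → (Fin l → ℝ) → (Fin d → ℝ) → ℝ)
    (K : ℕ → (Fin l → ℝ) → (Fin d → ℝ) → Set (Fin l → ℝ))
    (V : ℕ → (Fin l → ℝ) → (Fin d → ℝ) → ℝ)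
    (hVmeas : ∀ t' y', Measurable (V t' y'))
    (C : ℝ) (hCH : ∀ s (hv : Fin l → ℝ) (x : Fin d → ℝ), |H s hv x| ≤ C)
    (hCV : ∀ s (y' : Fin l → ℝ) (x : Fin d → ℝ), |V s y' x| ≤ C)
    -- terminal consistency: `V_T(y_T, X_T) = H_T(h_T, X_T)` for admissible exercise
    (hVT : ∀ y' hv : Fin l → ℝ, ∀ᵐ ω ∂μ, hv ∈ K T y' (X T ω) →
      V T y' (X T ω) = H T hv (X T ω))
    (t : ℕ) (ht : t ≤ T) (y : Fin l → ℝ)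
    (hadm : Nonempty {h : ℕ → Ω → (Fin l → ℝ) // Admissible μ ℱ T K X t y h}) :
    ∀ᵐ ω ∂μ,
      dualEstimate μ ℱ T H K V X t y ω - V t y (X t ω)
        = (μ[fun ω' => ⨆ π : {h : ℕ → Ω → (Fin l → ℝ) // Admissible μ ℱ T K X t y h},
            ∑ s ∈ Finset.Ico t T,
              (H s (π.1 s ω') (X s ω')
                + condV μ ℱ V X s (ctrl y π.1 t (s + 1) ω') ω'
                - V s (ctrl y π.1 t s ω') (X s ω')) | ℱ t]) ω := by
  classical
  haveI : Nonempty {h : ℕ → Ω → (Fin l → ℝ) // Admissible μ ℱ T K X t y h} := hadm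
  set P := {h : ℕ → Ω → (Fin l → ℝ) // Admissible μ ℱ T K X t y h} with hP
  -- the two integrands and the shift
  set D : P → Ω → ℝ := fun π ω =>
    (∑ s ∈ Finset.Ico t T,
        (H s (π.1 s ω) (X s ω)
          - V (s + 1) (ctrl y π.1 t (s + 1) ω) (X (s + 1) ω)
          + condV μ ℱ V X s (ctrl y π.1 t (s + 1) ω) ω))
      + H T (π.1 T ω) (X T ω) with hD
  set G : P → Ω → ℝ := fun π ω =>
    ∑ s ∈ Finset.Ico t T,
      (H s (π.1 s ω) (X s ω)
        + condV μ ℱ V X s (ctrl y π.1 t (s + 1) ω) ω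
        - V s (ctrl y π.1 t s ω) (X s ω)) with hG
  set c : Ω → ℝ := fun ω => V t y (X t ω) with hc
  have hC0 : 0 ≤ C := le_trans (abs_nonneg _) (hCH 0 (fun _ => 0) (fun _ => 0))
  -- bound on condV at atoms
  have hcondbd : ∀ ω : Ω, μ {ω} ≠ 0 → ∀ (s : ℕ) (y' : Fin l → ℝ),
      |condV μ ℱ V X s y' ω| ≤ C := by
    intro ω hω s y'
    have hbdd : ∀ᵐ x ∂μ, |V (s + 1) y' (X (s + 1) x)| ≤ ((⟨C, hC0⟩ : NNReal) : ℝ) :=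
      Filter.Eventually.of_forall fun x => hCV _ _ _
    have := ae_bdd_condExp_of_ae_bdd (m := ℱ s) hbdd
    exact prop_of_ae this hω
  -- constancy on `mrel` classes
  have hctrlconst : ∀ (π : P) (ω ω' : Ω), mrel m0 ω ω' →
      ∀ s, ctrl y π.1 t s ω = ctrl y π.1 t s ω' := by
    intro π ω ω' hrel s
    unfold ctrl
    congr 1
    refine Finset.sum_congr rfl fun u _ => ?_
    exact eq_of_mrel ((π.2.1 u).mono (ℱ.le u) le_rfl) hrel
  have hXconst : ∀ (ω ω' : Ω), mrel m0 ω ω' → ∀ s, X s ω = X s ω' := by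
    intro ω ω' hrel s
    exact eq_of_mrel ((hX s).mono (ℱ.le s) le_rfl) hrel
  have hcondconst : ∀ (ω ω' : Ω), mrel m0 ω ω' → ∀ (s : ℕ) (y' : Fin l → ℝ),
      condV μ ℱ V X s y' ω = condV μ ℱ V X s y' ω' := by
    intro ω ω' hrel s y'
    exact eq_of_mrel
      ((stronglyMeasurable_condExp (m := ℱ s)
        (f := fun ω => V (s + 1) y' (X (s + 1) ω))).measurable.mono (ℱ.le s) le_rfl) hrel
  have hGconst : ∀ (π : P) (ω ω' : Ω), mrel m0 ω ω' → G π ω = G π ω' := by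
    intro π ω ω' hrel
    have hh : ∀ s, π.1 s ω = π.1 s ω' := fun s =>
      eq_of_mrel ((π.2.1 s).mono (ℱ.le s) le_rfl) hrel
    simp only [hG]
    refine Finset.sum_congr rfl fun s _ => ?_
    rw [hh s, hXconst ω ω' hrel s, hctrlconst π ω ω' hrel (s + 1),
      hctrlconst π ω ω' hrel s, hcondconst ω ω' hrel]
  have hDconst : ∀ (π : P) (ω ω' : Ω), mrel m0 ω ω' → D π ω = D π ω' := by
    intro π ω ω' hrel
    have hh : ∀ s, π.1 s ω = π.1 s ω' := fun s =>
      eq_of_mrel ((π.2.1 s).mono (ℱ.le s) le_rfl) hrel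
    simp only [hD]
    rw [hh T, hXconst ω ω' hrel T]
    congr 1
    refine Finset.sum_congr rfl fun s _ => ?_
    rw [hh s, hXconst ω ω' hrel s, hXconst ω ω' hrel (s + 1),
      hctrlconst π ω ω' hrel (s + 1), hcondconst ω ω' hrel]
  -- bound on G at atoms
  have hGbd : ∀ ω : Ω, μ {ω} ≠ 0 → ∀ π : P, |G π ω| ≤ (T : ℝ) * (3 * C) := by
    intro ω hω π
    calc |G π ω| ≤ ∑ s ∈ Finset.Ico t T,
        |H s (π.1 s ω) (X s ω)
          + condV μ ℱ V X s (ctrl y π.1 t (s + 1) ω) ω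
          - V s (ctrl y π.1 t s ω) (X s ω)| := Finset.abs_sum_le_sum_abs _ _
      _ ≤ ∑ _s ∈ Finset.Ico t T, (3 * C) := by
          refine Finset.sum_le_sum fun s _ => ?_
          have h1 := hCH s (π.1 s ω) (X s ω)
          have h2 := hcondbd ω hω s (ctrl y π.1 t (s + 1) ω)
          have h3 := hCV s (ctrl y π.1 t s ω) (X s ω)
          calc |_ + _ - _| ≤ |H s (π.1 s ω) (X s ω)
              + condV μ ℱ V X s (ctrl y π.1 t (s + 1) ω) ω|
              + |V s (ctrl y π.1 t s ω) (X s ω)| := abs_sub _ _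
            _ ≤ (|H s (π.1 s ω) (X s ω)|
              + |condV μ ℱ V X s (ctrl y π.1 t (s + 1) ω) ω|)
              + |V s (ctrl y π.1 t s ω) (X s ω)| := by
                exact add_le_add_left (abs_add_le _ _) _
            _ ≤ 3 * C := by linarith
      _ = ((Finset.Ico t T).card : ℝ) * (3 * C) := by
          rw [Finset.sum_const, nsmul_eq_mul]
      _ ≤ (T : ℝ) * (3 * C) := by
          refine mul_le_mul_of_nonneg_right ?_ (by linarith)
          exact_mod_cast le_trans (Nat.card_Ico t T ▸ Nat.sub_le T t) le_rfl
  have hGbdd : ∀ ω : Ω, μ {ω} ≠ 0 → BddAbove (Set.range fun π : P => G π ω) := by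
    intro ω hω
    exact ⟨(T : ℝ) * (3 * C), by rintro x ⟨π, rfl⟩; exact le_of_abs_le (hGbd ω hω π)⟩
  -- pointwise identity D = G + c at atoms
  have hkey : ∀ ω : Ω, μ {ω} ≠ 0 → ∀ π : P, D π ω = G π ω + c ω := by
    intro ω hω π
    have hadm_pt : ∀ s, t ≤ s → s ≤ T →
        π.1 s ω ∈ K s (ctrl y π.1 t s ω) (X s ω) := prop_of_ae π.2.2 hω
    have hVT_pt : V T (ctrl y π.1 t T ω) (X T ω) = H T (π.1 T ω) (X T ω) :=
      prop_of_ae (hVT (ctrl y π.1 t T ω) (π.1 T ω)) hω (hadm_pt T ht le_rfl)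
    have htel : ∑ s ∈ Finset.Ico t T,
        (V s (ctrl y π.1 t s ω) (X s ω)
          - V (s + 1) (ctrl y π.1 t (s + 1) ω) (X (s + 1) ω))
        = V t (ctrl y π.1 t t ω) (X t ω) - V T (ctrl y π.1 t T ω) (X T ω) :=
      sum_telescope_Ico (fun s => V s (ctrl y π.1 t s ω) (X s ω)) ht
    have hctrl_t : ctrl y π.1 t t ω = y := by
      unfold ctrl; simp
    have hsum : D π ω - G π ω
        = (∑ s ∈ Finset.Ico t T,
            (V s (ctrl y π.1 t s ω) (X s ω)
              - V (s + 1) (ctrl y π.1 t (s + 1) ω) (X (s + 1) ω)))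
          + H T (π.1 T ω) (X T ω) := by
      simp only [hD, hG]
      rw [add_sub_right_comm, ← Finset.sum_sub_distrib]
      congr 1
      refine Finset.sum_congr rfl fun s _ => ?_
      ring
    rw [htel, hctrl_t, hVT_pt] at hsum
    simp only [hc]
    linarith
  -- sup-level identity at atoms
  have hsupkey : ∀ ω : Ω, μ {ω} ≠ 0 →
      (⨆ π : P, D π ω) = (⨆ π : P, G π ω) + c ω := by
    intro ω hω
    rw [show (fun π : P => D π ω) = fun π : P => G π ω + c ω from
      funext fun π => hkey ω hω π]
    exact ciSup_add_const (hGbdd ω hω) (c ω)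
  -- the two integrand functions
  set gD : Ω → ℝ := fun ω => ⨆ π : P, D π ω with hgD
  set gG : Ω → ℝ := fun ω => ⨆ π : P, G π ω with hgG
  have hae_eq : gD =ᵐ[μ] fun ω => gG ω + c ω :=
    ae_of_atoms fun ω hω => hsupkey ω hω
  -- measurability and integrability of gG
  have hgGmeas : Measurable gG := by
    refine measurable_of_mrel fun ω ω' hrel => ?_
    simp only [hgG]
    exact iSup_congr fun π => hGconst π ω ω' hrel
  have hgGbd : ∀ᵐ ω ∂μ, ‖gG ω‖ ≤ (T : ℝ) * (3 * C) := by
    refine ae_of_atoms fun ω hω => ?_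
    rw [Real.norm_eq_abs, abs_le]
    constructor
    · obtain ⟨π0⟩ := hadm
      exact le_trans (neg_le_of_abs_le (hGbd ω hω π0)) (le_ciSup (hGbdd ω hω) π0)
    · exact ciSup_le fun π => le_of_abs_le (hGbd ω hω π)
  have hgGint : Integrable gG μ :=
    Integrable.mono' (integrable_const ((T : ℝ) * (3 * C)))
      hgGmeas.aestronglyMeasurable hgGbd
  -- integrability and ℱ t measurability of c
  have hcmeasF : Measurable[ℱ t] c := (hVmeas t y).comp (hX t)
  have hcmeas : Measurable c := hcmeasF.mono (ℱ.le t) le_rfl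
  have hcint : Integrable c μ :=
    Integrable.mono' (integrable_const C) hcmeas.aestronglyMeasurable
      (Filter.Eventually.of_forall fun ω => by
        rw [Real.norm_eq_abs]; exact hCV t y (X t ω))
  -- conditional expectation computations
  have step1 : μ[gD|ℱ t] =ᵐ[μ] μ[fun ω => gG ω + c ω|ℱ t] := condExp_congr_ae hae_eq
  have step2 : μ[fun ω => gG ω + c ω|ℱ t] =ᵐ[μ] μ[gG|ℱ t] + μ[c|ℱ t] :=
    condExp_add hgGint hcint _
  have step3 : μ[c|ℱ t] = c :=
    condExp_of_stronglyMeasurable (ℱ.le t) hcmeasF.stronglyMeasurable hcint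
  have hdual : dualEstimate μ ℱ T H K V X t y = μ[gD|ℱ t] := rfl
  have hfinal : μ[gD|ℱ t] =ᵐ[μ] fun ω => (μ[gG|ℱ t]) ω + c ω := by
    refine step1.trans (step2.trans ?_)
    rw [step3]
    rfl
  rw [hdual]
  filter_upwards [hfinal] with ω hω
  rw [hω]
  simp only [hc, hgG, hG]
  ring
end

section
/- If the approximations V_t satisfy the exact dynamic programming equations, i.e., V_t(y,x) = sup_{h ∈ K_t(y,x)} { H_t(h,x) + E[V_{t+1}(y-h, X_{t+1}) | X_t = x] } for t < T and V_T(y,x) = sup_{h ∈ K_T(y,x)} H_T(h,x), then for every admissible policy and every s, the summand H_s(h_s, X_s) + E_s[V_{s+1}(y_{s+1}, X_{s+1})] - V_s(y_s, X_s) is almost surely nonpositive, and hence the dual upper estimate built from V equals V exactly: V^↑_t(y,x) = V_t(y,x) = V^{K,*}_t(y,x). -/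
open MeasureTheory Finset

-- a.e. statements hold at positive-measure points
lemma holds_of_pos {Ω : Type*} {m0 : MeasurableSpace Ω} {μ : Measure Ω}
    {p : Ω → Prop} (h : ∀ᵐ ω ∂μ, p ω) (ω : Ω) (hω : μ {ω} ≠ 0) : p ω := by
  by_contra hc
  exact hω (le_antisymm ((measure_mono (by simpa using hc)).trans (ae_iff.mp h).le) zero_le)

lemma ae_pos {Ω : Type*} [Fintype Ω] {m0 : MeasurableSpace Ω} (μ : Measure Ω) :
    ∀ᵐ ω ∂μ, μ {ω} ≠ 0 := by
  classical
  rw [ae_iff]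
  have : {ω | ¬ μ {ω} ≠ 0} ⊆ ⋃ ω ∈ (Finset.univ.filter (fun ω : Ω => μ {ω} = 0)), {ω} := by
    intro ω hω
    simp only [Set.mem_setOf_eq, not_not] at hω
    simp [hω]
  refine le_antisymm ((measure_mono this).trans ?_) zero_le
  refine (measure_biUnion_finset_le _ _).trans ?_
  refine le_of_eq (Finset.sum_eq_zero ?_)
  intro x hx
  simpa using (Finset.mem_filter.mp hx).2

-- composition of an arbitrary function after a finite-range measurable one
lemma measurable_comp_of_finite {Ω α β : Type*} [Finite Ω] {m : MeasurableSpace Ω}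
    [MeasurableSpace α] [MeasurableSingletonClass α] [MeasurableSpace β]
    {F : Ω → α} (hF : Measurable[m] F) (g : α → β) :
    Measurable[m] (fun ω => g (F ω)) := by
  intro s _
  have : (fun ω => g (F ω)) ⁻¹' s = F ⁻¹' (g ⁻¹' s ∩ Set.range F) := by
    ext ω; simp
  rw [this]
  exact hF (((Set.finite_range F).inter_of_right _).measurableSet)

-- every measurable function on a nonempty finite prob space is integrable
lemma integrable_of_finite' {Ω : Type*} [Fintype Ω] [Nonempty Ω] {m0 : MeasurableSpace Ω}
    {μ : Measure Ω} [IsFiniteMeasure μ] {f : Ω → ℝ} (hf : Measurable f) :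
    Integrable f μ := by
  classical
  refine (integrable_const (Finset.univ.sup' Finset.univ_nonempty (fun ω => |f ω|))).mono'
    hf.aestronglyMeasurable (ae_of_all _ fun ω => ?_)
  rw [Real.norm_eq_abs]; exact Finset.le_sup' (fun ω => |f ω|) (Finset.mem_univ ω)


lemma condexp_abs_le {Ω : Type*} {m m0 : MeasurableSpace Ω} {μ : Measure Ω}
    [IsFiniteMeasure μ] (hm : m ≤ m0) {f : Ω → ℝ} (hf : Integrable f μ)
    {C : ℝ} (hb : ∀ ω, |f ω| ≤ C) :
    ∀ᵐ ω ∂μ, |(μ[f|m]) ω| ≤ C := by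
  have h1 : μ[f|m] ≤ᵐ[μ] μ[(fun _ => C)|m] :=
    condExp_mono hf (integrable_const C) (ae_of_all _ fun ω => (abs_le.mp (hb ω)).2)
  have h2 : μ[(fun _ => -C)|m] ≤ᵐ[μ] μ[f|m] :=
    condExp_mono (integrable_const (-C)) hf (ae_of_all _ fun ω => (abs_le.mp (hb ω)).1)
  have hc1 : μ[(fun _ : Ω => C)|m] = fun _ => C := condExp_const hm C
  have hc2 : μ[(fun _ : Ω => -C)|m] = fun _ => -C := condExp_const hm (-C)
  rw [hc1] at h1; rw [hc2] at h2
  filter_upwards [h1, h2] with ω e1 e2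
  rw [abs_le]
  exact ⟨by simpa using e2, by simpa using e1⟩

lemma condexp_comp_eq {Ω α : Type*} [Fintype Ω] {m m0 : MeasurableSpace Ω}
    {μ : Measure Ω} [IsFiniteMeasure μ] (hm : m ≤ m0)
    [MeasurableSpace α] [MeasurableSingletonClass α]
    {Y : Ω → α} (hY : Measurable[m] Y) {g : α → Ω → ℝ}
    (hg : ∀ v, Integrable (g v) μ) :
    μ[(fun ω => g (Y ω) ω)|m] =ᵐ[μ] fun ω => (μ[g (Y ω)|m]) ω := by
  classical
  set s : Finset α := Finset.univ.image Y with hs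
  have hdecomp : ∀ (G : α → Ω → ℝ) (ω : Ω),
      G (Y ω) ω = ∑ v ∈ s, Set.indicator (Y ⁻¹' {v}) (G v) ω := by
    intro G ω
    rw [Finset.sum_eq_single_of_mem (Y ω) (Finset.mem_image.mpr ⟨ω, Finset.mem_univ _, rfl⟩)]
    · simp [Set.indicator_of_mem]
    · intro b _ hb
      exact Set.indicator_of_notMem (by simpa using fun h => hb h.symm) _
  have hmv : ∀ v : α, MeasurableSet[m] (Y ⁻¹' {v}) := fun v => hY (measurableSet_singleton v)
  have hinte : ∀ v : α, Integrable (Set.indicator (Y ⁻¹' {v}) (g v)) μ :=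
    fun v => (hg v).indicator (hm _ (hmv v))
  have e1 : μ[(fun ω => g (Y ω) ω)|m]
      = μ[(∑ v ∈ s, Set.indicator (Y ⁻¹' {v}) (g v))|m] := by
    have hfun : (fun ω => g (Y ω) ω) = ∑ v ∈ s, Set.indicator (Y ⁻¹' {v}) (g v) := by
      funext ω
      rw [hdecomp g ω, Finset.sum_apply]
    rw [hfun]
  have e2 : μ[(∑ v ∈ s, Set.indicator (Y ⁻¹' {v}) (g v))|m]
      =ᵐ[μ] ∑ v ∈ s, μ[Set.indicator (Y ⁻¹' {v}) (g v)|m] :=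
    condExp_finsetSum (m := m) (fun v _ => hinte v)
  have e3 : ∀ v ∈ s, μ[Set.indicator (Y ⁻¹' {v}) (g v)|m]
      =ᵐ[μ] fun ω => Set.indicator (Y ⁻¹' {v}) (μ[g v|m]) ω := by
    intro v _
    have hprod : Set.indicator (Y ⁻¹' {v}) (g v)
        = (Set.indicator (Y ⁻¹' {v}) (fun _ => (1:ℝ))) * g v := by
      funext ω
      by_cases hω : ω ∈ Y ⁻¹' {v} <;>
        simp [Set.indicator_of_mem, Set.indicator_of_notMem, hω]
    have hsm : StronglyMeasurable[m] (Set.indicator (Y ⁻¹' {v}) (fun _ => (1:ℝ))) :=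
      stronglyMeasurable_const.indicator (hmv v)
    have := condExp_mul_of_stronglyMeasurable_left hsm (by rw [← hprod]; exact hinte v) (hg v)
    rw [hprod]
    refine this.trans (ae_of_all _ fun ω => ?_)
    by_cases hω : ω ∈ Y ⁻¹' {v} <;>
      simp [Set.indicator_of_mem, Set.indicator_of_notMem, hω]
  have e4 : (∑ v ∈ s, μ[Set.indicator (Y ⁻¹' {v}) (g v)|m])
      =ᵐ[μ] fun ω => ∑ v ∈ s, Set.indicator (Y ⁻¹' {v}) (μ[g v|m]) ω := by
    have : ∀ᵐ ω ∂μ, ∀ v ∈ s, (μ[Set.indicator (Y ⁻¹' {v}) (g v)|m]) ω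
        = Set.indicator (Y ⁻¹' {v}) (μ[g v|m]) ω :=
      (ae_ball_iff s.countable_toSet).mpr e3
    filter_upwards [this] with ω hω
    rw [Finset.sum_apply]
    exact Finset.sum_congr rfl hω
  refine (e1 ▸ e2.trans (e4.trans (ae_of_all _ fun ω => ?_)))
  exact (hdecomp (fun v => μ[g v|m]) ω).symm

lemma measurable_comp_apply {Ω α : Type*} [Fintype Ω] {m0 : MeasurableSpace Ω}
    [MeasurableSpace α] [MeasurableSingletonClass α]
    {Y : Ω → α} (hY : Measurable Y) {g : α → Ω → ℝ} (hg : ∀ v, Measurable (g v)) :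
    Measurable (fun ω => g (Y ω) ω) := by
  classical
  have hdecomp : (fun ω => g (Y ω) ω)
      = fun ω => ∑ v ∈ Finset.univ.image Y, Set.indicator (Y ⁻¹' {v}) (g v) ω := by
    funext ω
    rw [Finset.sum_eq_single_of_mem (Y ω) (Finset.mem_image.mpr ⟨ω, Finset.mem_univ _, rfl⟩)]
    · simp [Set.indicator_of_mem]
    · intro b _ hb
      exact Set.indicator_of_notMem (by simpa using fun h => hb h.symm) _
  rw [hdecomp]
  exact Finset.measurable_fun_sum _ fun v _ =>
    ((hg v).indicator (hY (measurableSet_singleton v)))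

section opt
variable {Ω : Type*} {l d : ℕ}

/-- the control path of the "greedy/optimal" policy built from a selector `gg` -/
noncomputable def optCtrl (gg : ℕ → (Fin l → ℝ) → (Fin d → ℝ) → (Fin l → ℝ))
    (X : ℕ → Ω → (Fin d → ℝ)) (y : Fin l → ℝ) : ℕ → Ω → (Fin l → ℝ)
  | 0 => fun _ => y
  | (s+1) => fun ω => optCtrl gg X y s ω - gg s (optCtrl gg X y s ω) (X s ω)

/-- the greedy policy from a selector `gg` -/
noncomputable def optPol (gg : ℕ → (Fin l → ℝ) → (Fin d → ℝ) → (Fin l → ℝ))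
    (X : ℕ → Ω → (Fin d → ℝ)) (y : Fin l → ℝ) (s : ℕ) (ω : Ω) : Fin l → ℝ :=
  gg s (optCtrl gg X y s ω) (X s ω)

lemma ctrl_succ {E : Type*} [AddCommGroup E] (y : E) (π : ℕ → Ω → E) (s : ℕ) (ω : Ω) :
    ctrl y π 0 (s+1) ω = ctrl y π 0 s ω - π s ω := by
  simp [ctrl, Finset.sum_Ico_succ_top (Nat.zero_le s), sub_sub, Finset.sum_range_succ]

lemma ctrl_zero {E : Type*} [AddCommGroup E] (y : E) (π : ℕ → Ω → E) (ω : Ω) :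
    ctrl y π 0 0 ω = y := by simp [ctrl]

lemma ctrl_optPol (gg : ℕ → (Fin l → ℝ) → (Fin d → ℝ) → (Fin l → ℝ))
    (X : ℕ → Ω → (Fin d → ℝ)) (y : Fin l → ℝ) (s : ℕ) (ω : Ω) :
    ctrl y (optPol gg X y) 0 s ω = optCtrl gg X y s ω := by
  induction s with
  | zero => simp [ctrl, optCtrl]
  | succ s ih => rw [ctrl_succ, ih]; rfl

lemma ctrl_measurable [Fintype Ω] {m0 : MeasurableSpace Ω} (ℱ : Filtration ℕ m0)
    (y : Fin l → ℝ) {π : ℕ → Ω → (Fin l → ℝ)} (hπ : ∀ t, Measurable[ℱ t] (π t))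
    {n m : ℕ} (hnm : n ≤ m + 1) : Measurable[ℱ m] (ctrl y π 0 n) := by
  refine measurable_const.sub (Finset.measurable_sum _ fun t ht => ?_)
  have ht' : t ≤ m := by
    have := (Finset.mem_Ico.mp ht).2
    omega
  exact (hπ t).mono (ℱ.mono ht') le_rfl

lemma optCtrl_measurable [Fintype Ω] {m0 : MeasurableSpace Ω} (ℱ : Filtration ℕ m0)
    (gg : ℕ → (Fin l → ℝ) → (Fin d → ℝ) → (Fin l → ℝ))
    {X : ℕ → Ω → (Fin d → ℝ)} (hX : ∀ t, Measurable[ℱ t] (X t)) (y : Fin l → ℝ) :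
    ∀ s, Measurable[ℱ s] (optCtrl gg X y s) := by
  intro s
  induction s with
  | zero => exact measurable_const
  | succ s ih =>
    have hF : Measurable[ℱ (s+1)] (fun ω => (optCtrl gg X y s ω, X s ω)) :=
      (ih.mono (ℱ.mono s.le_succ) le_rfl).prodMk ((hX s).mono (ℱ.mono s.le_succ) le_rfl)
    exact measurable_comp_of_finite hF
      (fun p : (Fin l → ℝ) × (Fin d → ℝ) => p.1 - gg s p.1 p.2)

lemma optPol_measurable [Fintype Ω] {m0 : MeasurableSpace Ω} (ℱ : Filtration ℕ m0)
    (gg : ℕ → (Fin l → ℝ) → (Fin d → ℝ) → (Fin l → ℝ))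
    {X : ℕ → Ω → (Fin d → ℝ)} (hX : ∀ t, Measurable[ℱ t] (X t)) (y : Fin l → ℝ) :
    ∀ s, Measurable[ℱ s] (optPol gg X y s) := by
  intro s
  have hF : Measurable[ℱ s] (fun ω => (optCtrl gg X y s ω, X s ω)) :=
    (optCtrl_measurable ℱ gg hX y s).prodMk (hX s)
  exact measurable_comp_of_finite hF
    (fun p : (Fin l → ℝ) × (Fin d → ℝ) => gg s p.1 p.2)

end opt

lemma condexp_add4 {Ω : Type*} {m m0 : MeasurableSpace Ω} {μ : Measure Ω}
    {f1 f2 f3 f4 : Ω → ℝ} (h1 : Integrable f1 μ) (h2 : Integrable f2 μ)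
    (h3 : Integrable f3 μ) (h4 : Integrable f4 μ) :
    μ[f1 + f2 + f3 + f4|m] =ᵐ[μ] μ[f1|m] + μ[f2|m] + μ[f3|m] + μ[f4|m] := by
  calc μ[f1 + f2 + f3 + f4|m]
      =ᵐ[μ] μ[f1 + f2 + f3|m] + μ[f4|m] := condExp_add (m := m) ((h1.add h2).add h3) h4
    _ =ᵐ[μ] (μ[f1 + f2|m] + μ[f3|m]) + μ[f4|m] :=
        ((condExp_add (m := m) (h1.add h2) h3).add Filter.EventuallyEq.rfl)
    _ =ᵐ[μ] ((μ[f1|m] + μ[f2|m]) + μ[f3|m]) + μ[f4|m] :=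
        (((condExp_add (m := m) h1 h2).add Filter.EventuallyEq.rfl).add Filter.EventuallyEq.rfl)

lemma stronglyMeasurable_comp_apply {Ω α : Type*} [Fintype Ω] {m : MeasurableSpace Ω}
    [MeasurableSpace α] [MeasurableSingletonClass α]
    {Y : Ω → α} (hY : Measurable[m] Y) {g : α → Ω → ℝ}
    (hg : ∀ v, StronglyMeasurable[m] (g v)) :
    StronglyMeasurable[m] (fun ω => g (Y ω) ω) := by
  classical
  have hdecomp : (fun ω => g (Y ω) ω)
      = fun ω => ∑ v ∈ Finset.univ.image Y, Set.indicator (Y ⁻¹' {v}) (g v) ω := by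
    funext ω
    rw [Finset.sum_eq_single_of_mem (Y ω) (Finset.mem_image.mpr ⟨ω, Finset.mem_univ _, rfl⟩)]
    · simp [Set.indicator_of_mem]
    · intro b _ hb
      exact Set.indicator_of_notMem (by simpa using fun h => hb h.symm) _
  rw [hdecomp]
  exact Finset.stronglyMeasurable_fun_sum _ fun v _ =>
    ((hg v).indicator (hY (measurableSet_singleton v)))
/-- if `V` satisfies the exact dynamic programming equations then
every summand of the dual correction is a.s. nonpositive and the dual estimate
built from `V` equals `V`, which is the value function. -/
theorem dual_estimate_exact_for_bellman_solution
    {Ω : Type*} [Fintype Ω] {m0 : MeasurableSpace Ω}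
    (μ : Measure Ω) [IsProbabilityMeasure μ] (ℱ : Filtration ℕ m0)
    {l d : ℕ} (T : ℕ)
    (X : ℕ → Ω → (Fin d → ℝ)) (hX : ∀ t', Measurable[ℱ t'] (X t'))
    (H : ℕ → (Fin l → ℝ) → (Fin d → ℝ) → ℝ)
    (K : ℕ → (Fin l → ℝ) → (Fin d → ℝ) → Set (Fin l → ℝ))
    (V : ℕ → (Fin l → ℝ) → (Fin d → ℝ) → ℝ)
    (hVmeas : ∀ t' y', Measurable (V t' y'))
    (C : ℝ) (hCH : ∀ s (hv : Fin l → ℝ) (x : Fin d → ℝ), |H s hv x| ≤ C)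
    (hCV : ∀ s (y' : Fin l → ℝ) (x : Fin d → ℝ), |V s y' x| ≤ C)
    (G : ℕ → (Fin l → ℝ) → (Fin d → ℝ) → ℝ)
    -- `G_t(y', X_t) = E[V_{t+1}(y', X_{t+1}) | X_t]` (Markov conditional expectation)
    (hG : ∀ t' (y' : Fin l → ℝ), (fun ω => G t' y' (X t' ω)) =ᵐ[μ]
      μ[fun ω => V (t' + 1) y' (X (t' + 1) ω) | ℱ t'])
    -- exact Bellman equations
    (hBell : ∀ t', t' < T → ∀ (y' : Fin l → ℝ) (x : Fin d → ℝ),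
      V t' y' x = ⨆ h ∈ K t' y' x, (H t' h x + G t' (y' - h) x))
    (hBellT : ∀ (y' : Fin l → ℝ) (x : Fin d → ℝ),
      V T y' x = ⨆ h ∈ K T y' x, H T h x)
    -- attainment of the suprema
    (hatt : ∀ t', t' < T → ∀ (y' : Fin l → ℝ) (x : Fin d → ℝ),
      ∃ h ∈ K t' y' x, V t' y' x = H t' h x + G t' (y' - h) x)
    (hattT : ∀ (y' : Fin l → ℝ) (x : Fin d → ℝ), ∃ h ∈ K T y' x, V T y' x = H T h x)
    (y : Fin l → ℝ) :
    (∀ π : ℕ → Ω → (Fin l → ℝ), Admissible μ ℱ T K X 0 y π → ∀ s, s < T →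
      ∀ᵐ ω ∂μ,
        H s (π s ω) (X s ω) + condV μ ℱ V X s (ctrl y π 0 (s + 1) ω) ω
          - V s (ctrl y π 0 s ω) (X s ω) ≤ 0)
    ∧ (dualEstimate μ ℱ T H K V X 0 y =ᵐ[μ] fun ω => V 0 y (X 0 ω))
    ∧ (dualEstimate μ ℱ T H K V X 0 y =ᵐ[μ] valueFn μ ℱ T H K X 0 y) := by
  classical
  have hΩ : Nonempty Ω := by
    rcases isEmpty_or_nonempty Ω with h | h
    · exfalso
      have h1 : μ Set.univ = 1 := measure_univ
      rw [Set.univ_eq_empty_iff.mpr h] at h1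
      simp at h1
    · exact h
  have hC0 : (0:ℝ) ≤ C := le_trans (abs_nonneg _) (hCH 0 0 0)
  have hXm : ∀ t, Measurable (X t) := fun t => (hX t).mono (ℱ.le t) le_rfl
  have hInt : ∀ {f : Ω → ℝ}, Measurable f → Integrable f μ :=
    fun hf => integrable_of_finite' hf
  -- `G` is bounded at positive-measure points
  have hGb : ∀ s (ω : Ω), μ {ω} ≠ 0 → ∀ y' : Fin l → ℝ, |G s y' (X s ω)| ≤ C := by
    intro s ω hω y'
    have hint : Integrable (fun ω' => V (s+1) y' (X (s+1) ω')) μ :=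
      hInt ((hVmeas _ _).comp (hXm _))
    have h1 := holds_of_pos (hG s y') ω hω
    have h2 := holds_of_pos (condexp_abs_le (ℱ.le s) hint (fun ω' => hCV _ _ _)) ω hω
    have h1' : G s y' (X s ω) = (μ[fun ω => V (s + 1) y' (X (s + 1) ω)|ℱ s]) ω := h1
    rw [h1']; exact h2
  have hcondG : ∀ s (y' : Fin l → ℝ) (ω : Ω), μ {ω} ≠ 0 →
      condV μ ℱ V X s y' ω = G s y' (X s ω) :=
    fun s y' ω hω => (holds_of_pos (hG s y') ω hω).symm
  -- pointwise Bellman inequalities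
  have hbell_le : ∀ s, s < T → ∀ x : Fin d → ℝ, (∀ y'' : Fin l → ℝ, |G s y'' x| ≤ C) →
      ∀ y' hv : Fin l → ℝ, hv ∈ K s y' x → H s hv x + G s (y' - hv) x ≤ V s y' x := by
    intro s hs x hGx y' hv hK
    rw [hBell s hs y' x]
    have hbdd : ∀ h' : Fin l → ℝ,
        (⨆ _ : h' ∈ K s y' x, (H s h' x + G s (y' - h') x)) ≤ C + C := by
      intro h'
      refine Real.iSup_le (fun _ => ?_) (by linarith)
      have h1 := abs_le.mp (hCH s h' x)
      have h2 := abs_le.mp (hGx (y' - h'))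
      linarith [h1.2, h2.2]
    calc H s hv x + G s (y' - hv) x
        = ⨆ _ : hv ∈ K s y' x, (H s hv x + G s (y' - hv) x) :=
          (ciSup_pos (f := fun _ => H s hv x + G s (y' - hv) x) hK).symm
      _ ≤ ⨆ h' : Fin l → ℝ, ⨆ _ : h' ∈ K s y' x, (H s h' x + G s (y' - h') x) :=
          le_ciSup ⟨C + C, by rintro _ ⟨h', rfl⟩; exact hbdd h'⟩ hv
  have hbellT_le : ∀ (x : Fin d → ℝ) (y' hv : Fin l → ℝ), hv ∈ K T y' x →
      H T hv x ≤ V T y' x := by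
    intro x y' hv hK
    rw [hBellT y' x]
    have hbdd : ∀ h' : Fin l → ℝ, (⨆ _ : h' ∈ K T y' x, H T h' x) ≤ C := by
      intro h'
      exact Real.iSup_le (fun _ => (abs_le.mp (hCH T h' x)).2) hC0
    calc H T hv x = ⨆ _ : hv ∈ K T y' x, H T hv x :=
          (ciSup_pos (f := fun _ => H T hv x) hK).symm
      _ ≤ ⨆ h' : Fin l → ℝ, ⨆ _ : h' ∈ K T y' x, H T h' x :=
          le_ciSup ⟨C, by rintro _ ⟨h', rfl⟩; exact hbdd h'⟩ hv
  -- the D inequality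
  have hD : ∀ (π : ℕ → Ω → (Fin l → ℝ)) (s : ℕ), s < T → ∀ ω : Ω, μ {ω} ≠ 0 →
      π s ω ∈ K s (ctrl y π 0 s ω) (X s ω) →
      H s (π s ω) (X s ω) + condV μ ℱ V X s (ctrl y π 0 (s+1) ω) ω
        ≤ V s (ctrl y π 0 s ω) (X s ω) := by
    intro π s hs ω hω hK
    rw [ctrl_succ, hcondG s _ ω hω]
    exact hbell_le s hs _ (hGb s ω hω) _ _ hK
  -- PART 1
  have part1 : ∀ π : ℕ → Ω → (Fin l → ℝ), Admissible μ ℱ T K X 0 y π → ∀ s, s < T →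
      ∀ᵐ ω ∂μ,
        H s (π s ω) (X s ω) + condV μ ℱ V X s (ctrl y π 0 (s + 1) ω) ω
          - V s (ctrl y π 0 s ω) (X s ω) ≤ 0 := by
    intro π hπ s hs
    filter_upwards [hπ.2, ae_pos μ] with ω hKω hω
    have := hD π s hs ω hω (hKω s (Nat.zero_le s) hs.le)
    linarith
  -- the optimal policy
  choose g1 hg1K hg1V using hatt
  choose gT hgTK hgTV using hattT
  set gg : ℕ → (Fin l → ℝ) → (Fin d → ℝ) → (Fin l → ℝ) :=
    fun t' => if h : t' < T then g1 t' h else gT with hgg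
  set πs : ℕ → Ω → (Fin l → ℝ) := optPol gg X y with hπs
  have hπs_def : ∀ s ω, πs s ω = gg s (optCtrl gg X y s ω) (X s ω) := fun s ω => rfl
  have hπsK : ∀ s, s ≤ T → ∀ ω, πs s ω ∈ K s (ctrl y πs 0 s ω) (X s ω) := by
    intro s hs ω
    rw [hπs, ctrl_optPol]
    show gg s (optCtrl gg X y s ω) (X s ω) ∈ _
    rcases lt_or_eq_of_le hs with h | h
    · rw [hgg]; simp only [dif_pos h]
      exact hg1K s h _ _
    · rw [hgg]; simp only [h, dif_neg (lt_irrefl T)]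
      exact hgTK _ _
  have hπsAdm : Admissible μ ℱ T K X 0 y πs :=
    ⟨optPol_measurable ℱ gg hX y, ae_of_all _ fun ω s _ hsT => hπsK s hsT ω⟩
  have hπsV : ∀ s, s < T → ∀ ω, V s (ctrl y πs 0 s ω) (X s ω)
      = H s (πs s ω) (X s ω) + G s (ctrl y πs 0 (s+1) ω) (X s ω) := by
    intro s hs ω
    rw [ctrl_succ, hπs, ctrl_optPol]
    show V s _ _ = H s (gg s (optCtrl gg X y s ω) (X s ω)) _
      + G s (optCtrl gg X y s ω - gg s (optCtrl gg X y s ω) (X s ω)) _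
    rw [hgg]; simp only [dif_pos hs]
    exact hg1V s hs _ _
  have hπsVT : ∀ ω, V T (ctrl y πs 0 T ω) (X T ω) = H T (πs T ω) (X T ω) := by
    intro ω
    rw [hπs, ctrl_optPol]
    show V T _ _ = H T (gg T (optCtrl gg X y T ω) (X T ω)) _
    rw [hgg]; simp only [dif_neg (lt_irrefl T)]
    exact hgTV _ _
  -- upper bound for the dual summand expression, any pointwise-admissible policy
  have hA_le : ∀ (π : ℕ → Ω → (Fin l → ℝ)) (ω : Ω), μ {ω} ≠ 0 →
      (∀ s, s ≤ T → π s ω ∈ K s (ctrl y π 0 s ω) (X s ω)) →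
      (∑ s ∈ Finset.Ico 0 T,
          (H s (π s ω) (X s ω) - V (s+1) (ctrl y π 0 (s+1) ω) (X (s+1) ω)
            + condV μ ℱ V X s (ctrl y π 0 (s+1) ω) ω))
        + H T (π T ω) (X T ω) ≤ V 0 y (X 0 ω) := by
    intro π ω hω hK
    have hsum : ∑ s ∈ Finset.Ico 0 T,
          (H s (π s ω) (X s ω) - V (s+1) (ctrl y π 0 (s+1) ω) (X (s+1) ω)
            + condV μ ℱ V X s (ctrl y π 0 (s+1) ω) ω)
        = (∑ s ∈ Finset.range T,
            (H s (π s ω) (X s ω) + condV μ ℱ V X s (ctrl y π 0 (s+1) ω) ω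
              - V s (ctrl y π 0 s ω) (X s ω)))
          + (V 0 (ctrl y π 0 0 ω) (X 0 ω) - V T (ctrl y π 0 T ω) (X T ω)) := by
      rw [← Finset.sum_range_sub' (fun s => V s (ctrl y π 0 s ω) (X s ω)) T,
        ← Finset.sum_add_distrib, Finset.range_eq_Ico]
      exact Finset.sum_congr rfl fun s _ => by ring
    rw [hsum]
    have h1 : (∑ s ∈ Finset.range T,
        (H s (π s ω) (X s ω) + condV μ ℱ V X s (ctrl y π 0 (s+1) ω) ω
          - V s (ctrl y π 0 s ω) (X s ω))) ≤ 0 := by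
      refine Finset.sum_nonpos fun s hs => ?_
      have := hD π s (Finset.mem_range.mp hs) ω hω (hK s (Finset.mem_range.mp hs).le)
      linarith
    have h2 : H T (π T ω) (X T ω) ≤ V T (ctrl y π 0 T ω) (X T ω) :=
      hbellT_le _ _ _ (hK T le_rfl)
    have h3 : V 0 (ctrl y π 0 0 ω) (X 0 ω) = V 0 y (X 0 ω) := by rw [ctrl_zero]
    linarith
  -- exact value for the optimal policy
  have hA_eq : ∀ ω : Ω, μ {ω} ≠ 0 →
      (∑ s ∈ Finset.Ico 0 T,
          (H s (πs s ω) (X s ω) - V (s+1) (ctrl y πs 0 (s+1) ω) (X (s+1) ω)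
            + condV μ ℱ V X s (ctrl y πs 0 (s+1) ω) ω))
        + H T (πs T ω) (X T ω) = V 0 y (X 0 ω) := by
    intro ω hω
    have hsum : ∑ s ∈ Finset.Ico 0 T,
          (H s (πs s ω) (X s ω) - V (s+1) (ctrl y πs 0 (s+1) ω) (X (s+1) ω)
            + condV μ ℱ V X s (ctrl y πs 0 (s+1) ω) ω)
        = (∑ s ∈ Finset.range T,
            (H s (πs s ω) (X s ω) + condV μ ℱ V X s (ctrl y πs 0 (s+1) ω) ω
              - V s (ctrl y πs 0 s ω) (X s ω)))
          + (V 0 (ctrl y πs 0 0 ω) (X 0 ω) - V T (ctrl y πs 0 T ω) (X T ω)) := by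
      rw [← Finset.sum_range_sub' (fun s => V s (ctrl y πs 0 s ω) (X s ω)) T,
        ← Finset.sum_add_distrib, Finset.range_eq_Ico]
      exact Finset.sum_congr rfl fun s _ => by ring
    rw [hsum]
    have h1 : (∑ s ∈ Finset.range T,
        (H s (πs s ω) (X s ω) + condV μ ℱ V X s (ctrl y πs 0 (s+1) ω) ω
          - V s (ctrl y πs 0 s ω) (X s ω))) = 0 := by
      refine Finset.sum_eq_zero fun s hs => ?_
      have h5 := hπsV s (Finset.mem_range.mp hs) ω
      rw [hcondG s _ ω hω]
      rw [h5]; ring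
    have h2 := hπsVT ω
    have h3 : V 0 (ctrl y πs 0 0 ω) (X 0 ω) = V 0 y (X 0 ω) := by rw [ctrl_zero]
    rw [h1]; linarith
  -- the supremand of the dual estimate is a.e. equal to `V 0 y (X 0 ·)`
  haveI hne : Nonempty {h : ℕ → Ω → (Fin l → ℝ) // Admissible μ ℱ T K X 0 y h} :=
    ⟨⟨πs, hπsAdm⟩⟩
  have hS_eq : ∀ᵐ ω ∂μ,
      (⨆ π : {h : ℕ → Ω → (Fin l → ℝ) // Admissible μ ℱ T K X 0 y h},
        ((∑ s ∈ Finset.Ico 0 T,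
            (H s (π.1 s ω) (X s ω)
              - V (s + 1) (ctrl y π.1 0 (s + 1) ω) (X (s + 1) ω)
              + condV μ ℱ V X s (ctrl y π.1 0 (s + 1) ω) ω))
          + H T (π.1 T ω) (X T ω))) = V 0 y (X 0 ω) := by
    filter_upwards [ae_pos μ] with ω hω
    refine le_antisymm (ciSup_le fun π => ?_) ?_
    · exact hA_le π.1 ω hω (fun s hs => holds_of_pos π.2.2 ω hω s (Nat.zero_le s) hs)
    · have hb : BddAbove (Set.range (fun π : {h : ℕ → Ω → (Fin l → ℝ) //
          Admissible μ ℱ T K X 0 y h} =>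
          (∑ s ∈ Finset.Ico 0 T,
            (H s (π.1 s ω) (X s ω)
              - V (s + 1) (ctrl y π.1 0 (s + 1) ω) (X (s + 1) ω)
              + condV μ ℱ V X s (ctrl y π.1 0 (s + 1) ω) ω))
          + H T (π.1 T ω) (X T ω))) := by
        refine ⟨V 0 y (X 0 ω), ?_⟩
        rintro _ ⟨π, rfl⟩
        exact hA_le π.1 ω hω (fun s hs => holds_of_pos π.2.2 ω hω s (Nat.zero_le s) hs)
      exact le_trans (le_of_eq (hA_eq ω hω).symm) (le_ciSup hb ⟨πs, hπsAdm⟩)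
  -- PART 2
  set f0 : Ω → ℝ := fun ω => V 0 y (X 0 ω) with hf0
  have hf0m : Measurable[ℱ 0] f0 := (hVmeas 0 y).comp (hX 0)
  have hf0int : Integrable f0 μ := hInt (hf0m.mono (ℱ.le 0) le_rfl)
  have part2 : dualEstimate μ ℱ T H K V X 0 y =ᵐ[μ] f0 := by
    have hrfl : dualEstimate μ ℱ T H K V X 0 y
        = μ[fun ω => ⨆ π : {h : ℕ → Ω → (Fin l → ℝ) // Admissible μ ℱ T K X 0 y h},
            ((∑ s ∈ Finset.Ico 0 T,
                (H s (π.1 s ω) (X s ω)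
                  - V (s + 1) (ctrl y π.1 0 (s + 1) ω) (X (s + 1) ω)
                  + condV μ ℱ V X s (ctrl y π.1 0 (s + 1) ω) ω))
              + H T (π.1 T ω) (X T ω)) | ℱ 0] := rfl
    rw [hrfl]
    calc _ =ᵐ[μ] μ[f0|ℱ 0] := condExp_congr_ae hS_eq
      _ =ᵐ[μ] f0 := by
          rw [condExp_of_stronglyMeasurable (ℱ.le 0) hf0m.stronglyMeasurable hf0int]
  refine ⟨part1, part2, ?_⟩
  -- PART 3 : the value function also equals `f0`
  have hcore : ∀ π : ℕ → Ω → (Fin l → ℝ), (∀ s, Measurable[ℱ s] (π s)) →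
      ∃ SD R : Ω → ℝ,
        (polValue μ ℱ T H X 0 π =ᵐ[μ]
          fun ω => (μ[SD|ℱ 0]) ω + f0 ω + (μ[R|ℱ 0]) ω) ∧
        (∀ ω, SD ω = ∑ s ∈ Finset.range T,
          (H s (π s ω) (X s ω) + condV μ ℱ V X s (ctrl y π 0 (s+1) ω) ω
            - V s (ctrl y π 0 s ω) (X s ω))) ∧
        (∀ ω, R ω = H T (π T ω) (X T ω) - V T (ctrl y π 0 T ω) (X T ω)) ∧
        Integrable SD μ ∧ Integrable R μ := by
    intro π hπm'
    have hπm : ∀ s, Measurable (π s) := fun s => (hπm' s).mono (ℱ.le s) le_rfl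
    have hcm : ∀ n, Measurable (ctrl y π 0 n) := fun n =>
      (ctrl_measurable ℱ y hπm' (Nat.le_succ n)).mono (ℱ.le n) le_rfl
    have hHm : ∀ s, Measurable (fun ω => H s (π s ω) (X s ω)) := fun s =>
      measurable_comp_of_finite ((hπm s).prodMk (hXm s))
        (fun p : (Fin l → ℝ) × (Fin d → ℝ) => H s p.1 p.2)
    have hVcm : ∀ s n, Measurable (fun ω => V s (ctrl y π 0 n ω) (X s ω)) := fun s n =>
      measurable_comp_of_finite ((hcm n).prodMk (hXm s))
        (fun p : (Fin l → ℝ) × (Fin d → ℝ) => V s p.1 p.2)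
    have hcondVmeas : ∀ s, Measurable (fun ω => condV μ ℱ V X s (ctrl y π 0 (s+1) ω) ω) :=
      fun s => measurable_comp_apply (hcm (s+1))
        (fun v => (stronglyMeasurable_condExp.mono (ℱ.le s)).measurable)
    set SD : Ω → ℝ := fun ω => ∑ s ∈ Finset.range T,
      (H s (π s ω) (X s ω) + condV μ ℱ V X s (ctrl y π 0 (s+1) ω) ω
        - V s (ctrl y π 0 s ω) (X s ω)) with hSD
    set SM : Ω → ℝ := fun ω => ∑ s ∈ Finset.range T,
      (V (s+1) (ctrl y π 0 (s+1) ω) (X (s+1) ω)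
        - condV μ ℱ V X s (ctrl y π 0 (s+1) ω) ω) with hSM
    set R : Ω → ℝ := fun ω => H T (π T ω) (X T ω) - V T (ctrl y π 0 T ω) (X T ω) with hR
    have hSDint : Integrable SD μ := by
      rw [hSD]
      refine integrable_finset_sum _ fun s _ => hInt ?_
      exact ((hHm s).add (hcondVmeas s)).sub (hVcm s s)
    have hSMint : Integrable SM μ := by
      rw [hSM]
      exact integrable_finset_sum _ fun s _ =>
        hInt ((hVcm (s+1) (s+1)).sub (hcondVmeas s))
    have hRint : Integrable R μ := hInt ((hHm T).sub (hVcm T T))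
    have hWdec : (fun ω => ∑ s ∈ Finset.Icc 0 T, H s (π s ω) (X s ω))
        = fun ω => SD ω + SM ω + f0 ω + R ω := by
      funext ω
      have h1 : Finset.Icc 0 T = Finset.range (T+1) := by
        rw [Finset.range_eq_Ico, Finset.Ico_add_one_right_eq_Icc]
      rw [h1, Finset.sum_range_succ]
      have h2 : SD ω + SM ω = (∑ s ∈ Finset.range T, H s (π s ω) (X s ω))
          + (V T (ctrl y π 0 T ω) (X T ω) - V 0 (ctrl y π 0 0 ω) (X 0 ω)) := by
        simp only [hSD, hSM]
        rw [← Finset.sum_range_sub (fun s => V s (ctrl y π 0 s ω) (X s ω)) T,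
          ← Finset.sum_add_distrib, ← Finset.sum_add_distrib]
        exact Finset.sum_congr rfl fun s _ => by ring
      have h3 : ctrl y π 0 0 ω = y := ctrl_zero y π ω
      have h4 : R ω = H T (π T ω) (X T ω) - V T (ctrl y π 0 T ω) (X T ω) := rfl
      have h5 : f0 ω = V 0 y (X 0 ω) := rfl
      rw [h3] at h2
      linarith
    have hpol : polValue μ ℱ T H X 0 π = μ[fun ω => SD ω + SM ω + f0 ω + R ω|ℱ 0] := by
      show μ[(fun ω => ∑ s ∈ Finset.Icc 0 T, H s (π s ω) (X s ω))|ℱ 0] = _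
      rw [hWdec]
    have hsplit : μ[fun ω => SD ω + SM ω + f0 ω + R ω|ℱ 0] =ᵐ[μ]
        fun ω => (μ[SD|ℱ 0]) ω + (μ[SM|ℱ 0]) ω + (μ[f0|ℱ 0]) ω + (μ[R|ℱ 0]) ω :=
      condexp_add4 hSDint hSMint hf0int hRint
    have hSM0 : μ[SM|ℱ 0] =ᵐ[μ] 0 := by
      have hterm : ∀ s ∈ Finset.range T,
          μ[(fun ω => V (s+1) (ctrl y π 0 (s+1) ω) (X (s+1) ω)
            - condV μ ℱ V X s (ctrl y π 0 (s+1) ω) ω)|ℱ 0] =ᵐ[μ] 0 := by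
        intro s _
        have hY : Measurable[ℱ s] (ctrl y π 0 (s+1)) :=
          ctrl_measurable ℱ y hπm' (le_refl (s+1))
        have hgint : ∀ v : Fin l → ℝ, Integrable (fun ω => V (s+1) v (X (s+1) ω)) μ :=
          fun v => hInt ((hVmeas _ _).comp (hXm _))
        have h1 : μ[(fun ω => V (s+1) (ctrl y π 0 (s+1) ω) (X (s+1) ω))|ℱ s] =ᵐ[μ]
            fun ω => condV μ ℱ V X s (ctrl y π 0 (s+1) ω) ω :=
          condexp_comp_eq (ℱ.le s) hY hgint
        have hsm2 : StronglyMeasurable[ℱ s]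
            (fun ω => condV μ ℱ V X s (ctrl y π 0 (s+1) ω) ω) :=
          stronglyMeasurable_comp_apply hY (fun v => stronglyMeasurable_condExp)
        have hbint : Integrable (fun ω => condV μ ℱ V X s (ctrl y π 0 (s+1) ω) ω) μ :=
          hInt (hcondVmeas s)
        have haint : Integrable (fun ω => V (s+1) (ctrl y π 0 (s+1) ω) (X (s+1) ω)) μ :=
          hInt (hVcm (s+1) (s+1))
        have h2 : μ[(fun ω => V (s+1) (ctrl y π 0 (s+1) ω) (X (s+1) ω)
            - condV μ ℱ V X s (ctrl y π 0 (s+1) ω) ω)|ℱ s] =ᵐ[μ] 0 := by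
          have h3 := condExp_sub haint hbint (m := ℱ s)
          have h4 : μ[(fun ω => condV μ ℱ V X s (ctrl y π 0 (s+1) ω) ω)|ℱ s]
              = fun ω => condV μ ℱ V X s (ctrl y π 0 (s+1) ω) ω :=
            condExp_of_stronglyMeasurable (ℱ.le s) hsm2 hbint
          refine h3.trans ?_
          rw [h4]
          filter_upwards [h1] with ω hω
          simp only [Pi.sub_apply, Pi.zero_apply, hω, sub_self]
        calc μ[(fun ω => V (s+1) (ctrl y π 0 (s+1) ω) (X (s+1) ω)
              - condV μ ℱ V X s (ctrl y π 0 (s+1) ω) ω)|ℱ 0]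
            =ᵐ[μ] μ[μ[(fun ω => V (s+1) (ctrl y π 0 (s+1) ω) (X (s+1) ω)
              - condV μ ℱ V X s (ctrl y π 0 (s+1) ω) ω)|ℱ s]|ℱ 0] :=
              (condExp_condExp_of_le (ℱ.mono (Nat.zero_le s)) (ℱ.le s)).symm
          _ =ᵐ[μ] μ[(0 : Ω → ℝ)|ℱ 0] := condExp_congr_ae h2
          _ =ᵐ[μ] 0 := by rw [condExp_zero]
      have hSMsum : SM = ∑ s ∈ Finset.range T,
          (fun ω => V (s+1) (ctrl y π 0 (s+1) ω) (X (s+1) ω)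
            - condV μ ℱ V X s (ctrl y π 0 (s+1) ω) ω) := by
        funext ω
        rw [Finset.sum_apply]
      rw [hSMsum]
      have hcs := condExp_finsetSum (μ := μ) (m := ℱ 0)
        (f := fun s => (fun ω => V (s+1) (ctrl y π 0 (s+1) ω) (X (s+1) ω)
          - condV μ ℱ V X s (ctrl y π 0 (s+1) ω) ω)) (s := Finset.range T)
        (fun s _ => hInt ((hVcm (s+1) (s+1)).sub (hcondVmeas s)))
      refine hcs.trans ?_
      have hall : ∀ᵐ ω ∂μ, ∀ s ∈ Finset.range T,
          (μ[(fun ω => V (s+1) (ctrl y π 0 (s+1) ω) (X (s+1) ω)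
            - condV μ ℱ V X s (ctrl y π 0 (s+1) ω) ω)|ℱ 0]) ω = 0 := by
        refine (ae_ball_iff (Finset.range T).countable_toSet).mpr fun s hs => ?_
        filter_upwards [hterm s hs] with ω hω
        simpa using hω
      filter_upwards [hall] with ω hω
      rw [Finset.sum_apply]
      simp only [Pi.zero_apply]
      exact Finset.sum_eq_zero hω
    refine ⟨SD, R, ?_, fun ω => rfl, fun ω => rfl, hSDint, hRint⟩
    calc polValue μ ℱ T H X 0 π
        = μ[fun ω => SD ω + SM ω + f0 ω + R ω|ℱ 0] := hpol
      _ =ᵐ[μ] fun ω => (μ[SD|ℱ 0]) ω + (μ[SM|ℱ 0]) ω + (μ[f0|ℱ 0]) ω + (μ[R|ℱ 0]) ω :=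
          hsplit
      _ =ᵐ[μ] fun ω => (μ[SD|ℱ 0]) ω + f0 ω + (μ[R|ℱ 0]) ω := by
          have h4 : μ[f0|ℱ 0] = f0 :=
            condExp_of_stronglyMeasurable (ℱ.le 0) hf0m.stronglyMeasurable hf0int
          filter_upwards [hSM0] with ω h0
          simp only [Pi.zero_apply] at h0
          rw [h4, h0]
          ring
  -- any admissible policy value is ≤ f0 a.e.
  have hple : ∀ π : ℕ → Ω → (Fin l → ℝ), Admissible μ ℱ T K X 0 y π →
      polValue μ ℱ T H X 0 π ≤ᵐ[μ] f0 := by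
    intro π hπ
    obtain ⟨SD, R, hdec, hSDdef, hRdef, hSDint, hRint⟩ := hcore π hπ.1
    have hSDle : μ[SD|ℱ 0] ≤ᵐ[μ] 0 := by
      have h0 : SD ≤ᵐ[μ] 0 := by
        filter_upwards [ae_pos μ, hπ.2] with ω hω hKω
        rw [Pi.zero_apply, hSDdef ω]
        refine Finset.sum_nonpos fun s hs => ?_
        have := hD π s (Finset.mem_range.mp hs) ω hω
          (hKω s (Nat.zero_le s) (Finset.mem_range.mp hs).le)
        linarith
      have := condExp_mono (m := ℱ 0) hSDint (integrable_zero _ _ _) h0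
      have hce : μ[(fun _ : Ω => (0:ℝ))|ℱ 0] = (0 : Ω → ℝ) := condExp_zero
      rwa [condExp_zero] at this
    have hRle : μ[R|ℱ 0] ≤ᵐ[μ] 0 := by
      have h0 : R ≤ᵐ[μ] 0 := by
        filter_upwards [ae_pos μ, hπ.2] with ω hω hKω
        rw [Pi.zero_apply, hRdef ω]
        have := hbellT_le (X T ω) (ctrl y π 0 T ω) (π T ω) (hKω T (Nat.zero_le T) le_rfl)
        linarith
      have := condExp_mono (m := ℱ 0) hRint (integrable_zero _ _ _) h0
      have hce : μ[(fun _ : Ω => (0:ℝ))|ℱ 0] = (0 : Ω → ℝ) := condExp_zero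
      rwa [condExp_zero] at this
    filter_upwards [hdec, hSDle, hRle] with ω h1 h2 h3
    rw [h1]
    simp only [Pi.zero_apply] at h2 h3
    linarith
  -- the optimal policy attains f0 a.e.
  have hpeq : polValue μ ℱ T H X 0 πs =ᵐ[μ] f0 := by
    obtain ⟨SD, R, hdec, hSDdef, hRdef, hSDint, hRint⟩ := hcore πs hπsAdm.1
    have hSD0 : μ[SD|ℱ 0] =ᵐ[μ] 0 := by
      have h0 : SD =ᵐ[μ] 0 := by
        filter_upwards [ae_pos μ] with ω hω
        rw [Pi.zero_apply, hSDdef ω]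
        refine Finset.sum_eq_zero fun s hs => ?_
        rw [hcondG s _ ω hω]
        have := hπsV s (Finset.mem_range.mp hs) ω
        linarith
      refine (condExp_congr_ae h0).trans ?_
      rw [condExp_zero]
    have hR0 : μ[R|ℱ 0] =ᵐ[μ] 0 := by
      have h0 : R =ᵐ[μ] 0 := by
        filter_upwards [] with ω
        rw [Pi.zero_apply, hRdef ω, hπsVT ω]
        ring
      refine (condExp_congr_ae h0).trans ?_
      rw [condExp_zero]
    filter_upwards [hdec, hSD0, hR0] with ω h1 h2 h3
    rw [h1]
    simp only [Pi.zero_apply] at h2 h3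
    rw [h2, h3]
    ring
  have hval : valueFn μ ℱ T H K X 0 y =ᵐ[μ] f0 := by
    filter_upwards [ae_pos μ, hpeq] with ω hω hπsω
    simp only [valueFn]
    refine le_antisymm (ciSup_le fun π => holds_of_pos (hple π.1 π.2) ω hω) ?_
    have hb : BddAbove (Set.range fun π : {h : ℕ → Ω → (Fin l → ℝ) //
        Admissible μ ℱ T K X 0 y h} => polValue μ ℱ T H X 0 π.1 ω) := by
      refine ⟨f0 ω, ?_⟩
      rintro _ ⟨π, rfl⟩
      exact holds_of_pos (hple π.1 π.2) ω hω
    exact le_trans (le_of_eq hπsω.symm) (le_ciSup hb ⟨πs, hπsAdm⟩)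
  exact part2.trans hval.symm
end

section
/- With the pathwise optimum F_0 from the Bellman recursion along random trajectories, the dual estimate satisfies V^↑_0(y, x) = V_0(y, x) + E[ F_0(y, X_·) | X_0 = x ], where F_0(y, X_·) = sup over admissible policies of Σ_{s=0}^{T-1} ( H_s(h_s, X_s) + E_s[V_{s+1}(y_{s+1}, X_{s+1})] − V_s(y_s, X_s) ). -/
open MeasureTheory Finset

section AuxLemmas

variable {Ω : Type*}

/-- Two points are `MRel`-related if every measurable set containing the first
contains the second. -/
def MRel (m : MeasurableSpace Ω) (ω ω' : Ω) : Prop :=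
  ∀ s : Set Ω, MeasurableSet[m] s → ω ∈ s → ω' ∈ s

lemma MRel.eq_of_measurable {m : MeasurableSpace Ω} {β : Type*} [MeasurableSpace β]
    [MeasurableSingletonClass β] {f : Ω → β} (hf : Measurable[m] f)
    {ω ω' : Ω} (h : MRel m ω ω') : f ω' = f ω :=
  h (f ⁻¹' {f ω}) (hf (measurableSet_singleton _)) rfl

lemma measurable_of_mrel_s10 [Finite Ω] {m : MeasurableSpace Ω} {f : Ω → ℝ}
    (h : ∀ ω ω', MRel m ω ω' → f ω' = f ω) : Measurable[m] f := by
  intro B _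
  have hkey : f ⁻¹' B = ⋃ ω ∈ f ⁻¹' B, ⋂₀ {s : Set Ω | MeasurableSet[m] s ∧ ω ∈ s} := by
    ext ω'
    constructor
    · intro hω'
      exact Set.mem_biUnion hω' (fun s hs => hs.2)
    · intro hω'
      rcases Set.mem_iUnion₂.1 hω' with ⟨ω, hω, hmem⟩
      have hrel : MRel m ω ω' := fun s hs hωs => hmem s ⟨hs, hωs⟩
      simpa [Set.mem_preimage, h ω ω' hrel] using hω
  rw [hkey]
  exact MeasurableSet.biUnion ((f ⁻¹' B).to_countable)
    (fun ω _ => MeasurableSet.sInter (Set.to_countable _) fun s hs => hs.1)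

/-- On a finite space there is a single null set absorbing all a.e. statements. -/
lemma exists_null_superset [Fintype Ω] {m0 : MeasurableSpace Ω} (μ : MeasureTheory.Measure Ω) :
    ∃ N : Set Ω, μ N = 0 ∧ ∀ (P : Ω → Prop), (∀ᵐ ω ∂μ, P ω) → ∀ ω, ω ∉ N → P ω := by
  refine ⟨⋃₀ {s : Set Ω | μ s = 0}, ?_, ?_⟩
  · rw [measure_sUnion_null_iff (Set.to_countable _)]
    exact fun s hs => hs
  · intro P hP ω hω
    by_contra hPω
    exact hω (Set.mem_sUnion.2 ⟨{x | ¬ P x}, ae_iff.1 hP, hPω⟩)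

lemma my_ciSup_add {ι : Sort*} [Nonempty ι] {f : ι → ℝ}
    (hf : BddAbove (Set.range f)) (a : ℝ) :
    (⨆ i, (f i + a)) = (⨆ i, f i) + a := by
  apply le_antisymm
  · exact ciSup_le fun i => add_le_add_left (le_ciSup hf i) a
  · have hfa : BddAbove (Set.range fun i => f i + a) := by
      obtain ⟨b, hb⟩ := hf
      exact ⟨b + a, by rintro x ⟨i, rfl⟩; exact add_le_add_left (hb ⟨i, rfl⟩) a⟩
    have h2 : ∀ i, f i ≤ (⨆ i, (f i + a)) - a :=
      fun i => le_sub_iff_add_le.2 (le_ciSup hfa i)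
    linarith [ciSup_le h2]

end AuxLemmas

/-- the dual estimate equals the a priori estimate plus the
conditional expectation of the pathwise optimum `F_0`. -/
theorem dual_estimate_as_correction
    {Ω : Type*} [Fintype Ω] {m0 : MeasurableSpace Ω}
    (μ : Measure Ω) [IsProbabilityMeasure μ] (ℱ : Filtration ℕ m0)
    {l d : ℕ} (T : ℕ)
    (X : ℕ → Ω → (Fin d → ℝ)) (hX : ∀ t', Measurable[ℱ t'] (X t'))
    (H : ℕ → (Fin l → ℝ) → (Fin d → ℝ) → ℝ)
    (K : ℕ → (Fin l → ℝ) → (Fin d → ℝ) → Set (Fin l → ℝ))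
    (V : ℕ → (Fin l → ℝ) → (Fin d → ℝ) → ℝ)
    (hVmeas : ∀ t' y', Measurable (V t' y'))
    (C : ℝ) (hCH : ∀ s (hv : Fin l → ℝ) (x : Fin d → ℝ), |H s hv x| ≤ C)
    (hCV : ∀ s (y' : Fin l → ℝ) (x : Fin d → ℝ), |V s y' x| ≤ C)
    (hVT : ∀ y' hv : Fin l → ℝ, ∀ᵐ ω ∂μ, hv ∈ K T y' (X T ω) →
      V T y' (X T ω) = H T hv (X T ω))
    (y : Fin l → ℝ)
    (hadm : Nonempty {h : ℕ → Ω → (Fin l → ℝ) // Admissible μ ℱ T K X 0 y h})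
    -- the pathwise optimum `F_0` along the random trajectory
    (F0 : Ω → ℝ)
    (hF0 : ∀ ω, F0 ω = ⨆ π : {h : ℕ → Ω → (Fin l → ℝ) // Admissible μ ℱ T K X 0 y h},
      ∑ s ∈ Finset.range T,
        (H s (π.1 s ω) (X s ω)
          + condV μ ℱ V X s (ctrl y π.1 0 (s + 1) ω) ω
          - V s (ctrl y π.1 0 s ω) (X s ω))) :
    dualEstimate μ ℱ T H K V X 0 y =ᵐ[μ]
      fun ω => V 0 y (X 0 ω) + (μ[F0 | ℱ 0]) ω := by
  classical
  haveI : SigmaFinite (μ.trim (ℱ.le 0)) := inferInstance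
  haveI hne : Nonempty {h : ℕ → Ω → (Fin l → ℝ) // Admissible μ ℱ T K X 0 y h} := hadm
  obtain ⟨N, hN0, hN⟩ := exists_null_superset (m0 := m0) μ
  have hC0 : 0 ≤ C := le_trans (abs_nonneg _) (hCH 0 0 0)
  -- conditional expectations of V are bounded by C, a.e.
  have hcondae : ∀ s (y' : Fin l → ℝ), ∀ᵐ ω ∂μ, |condV μ ℱ V X s y' ω| ≤ C := by
    intro s y'
    have h := ae_bdd_condExp_of_ae_bdd (μ := μ) (m := ℱ s) (R := ⟨C, hC0⟩)
      (f := fun ω => V (s + 1) y' (X (s + 1) ω))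
      (Filter.Eventually.of_forall fun ω => by exact hCV (s + 1) y' (X (s + 1) ω))
    exact h
  -- the pathwise identity off N : dual integrand = F0 integrand + V 0 y (X 0 ω)
  have key : ∀ ω, ω ∉ N → ∀ π : {h : ℕ → Ω → (Fin l → ℝ) // Admissible μ ℱ T K X 0 y h},
      (∑ s ∈ Finset.Ico 0 T,
          (H s (π.1 s ω) (X s ω)
            - V (s + 1) (ctrl y π.1 0 (s + 1) ω) (X (s + 1) ω)
            + condV μ ℱ V X s (ctrl y π.1 0 (s + 1) ω) ω))
        + H T (π.1 T ω) (X T ω)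
      = (∑ s ∈ Finset.range T,
          (H s (π.1 s ω) (X s ω)
            + condV μ ℱ V X s (ctrl y π.1 0 (s + 1) ω) ω
            - V s (ctrl y π.1 0 s ω) (X s ω)))
        + V 0 y (X 0 ω) := by
    intro ω hω π
    have hmem : π.1 T ω ∈ K T (ctrl y π.1 0 T ω) (X T ω) :=
      hN _ π.2.2 ω hω T (Nat.zero_le T) le_rfl
    have hVTω : V T (ctrl y π.1 0 T ω) (X T ω) = H T (π.1 T ω) (X T ω) :=
      hN _ (hVT (ctrl y π.1 0 T ω) (π.1 T ω)) ω hω hmem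
    have htel : ∑ s ∈ Finset.range T,
        (V s (ctrl y π.1 0 s ω) (X s ω) - V (s + 1) (ctrl y π.1 0 (s + 1) ω) (X (s + 1) ω))
        = V 0 (ctrl y π.1 0 0 ω) (X 0 ω) - V T (ctrl y π.1 0 T ω) (X T ω) :=
      Finset.sum_range_sub' (fun s => V s (ctrl y π.1 0 s ω) (X s ω)) T
    have hy0 : ctrl y π.1 0 0 ω = y := by simp [ctrl]
    rw [← Finset.range_eq_Ico]
    have hsplit : ∑ s ∈ Finset.range T,
        (H s (π.1 s ω) (X s ω)
          - V (s + 1) (ctrl y π.1 0 (s + 1) ω) (X (s + 1) ω)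
          + condV μ ℱ V X s (ctrl y π.1 0 (s + 1) ω) ω)
        = (∑ s ∈ Finset.range T,
            (H s (π.1 s ω) (X s ω)
              + condV μ ℱ V X s (ctrl y π.1 0 (s + 1) ω) ω
              - V s (ctrl y π.1 0 s ω) (X s ω)))
          + ∑ s ∈ Finset.range T,
            (V s (ctrl y π.1 0 s ω) (X s ω)
              - V (s + 1) (ctrl y π.1 0 (s + 1) ω) (X (s + 1) ω)) := by
      rw [← Finset.sum_add_distrib]
      exact Finset.sum_congr rfl fun s _ => by ring
    rw [hsplit, htel, hy0, hVTω]
    ring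
  -- uniform bound on the F0 integrand off N
  have hfb : ∀ ω, ω ∉ N → ∀ π : {h : ℕ → Ω → (Fin l → ℝ) // Admissible μ ℱ T K X 0 y h},
      |∑ s ∈ Finset.range T,
          (H s (π.1 s ω) (X s ω)
            + condV μ ℱ V X s (ctrl y π.1 0 (s + 1) ω) ω
            - V s (ctrl y π.1 0 s ω) (X s ω))| ≤ 3 * C * T := by
    intro ω hω π
    refine (Finset.abs_sum_le_sum_abs _ _).trans ?_
    have hterm : ∀ s ∈ Finset.range T,
        |H s (π.1 s ω) (X s ω)
          + condV μ ℱ V X s (ctrl y π.1 0 (s + 1) ω) ω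
          - V s (ctrl y π.1 0 s ω) (X s ω)| ≤ 3 * C := by
      intro s _
      have h1 := hCH s (π.1 s ω) (X s ω)
      have h2 : |condV μ ℱ V X s (ctrl y π.1 0 (s + 1) ω) ω| ≤ C :=
        hN _ (hcondae s _) ω hω
      have h3 := hCV s (ctrl y π.1 0 s ω) (X s ω)
      set a := H s (π.1 s ω) (X s ω)
      set b := condV μ ℱ V X s (ctrl y π.1 0 (s + 1) ω) ω
      set c := V s (ctrl y π.1 0 s ω) (X s ω)
      have hab : |a + b - c| ≤ |a + b| + |c| := by
        simpa [sub_eq_add_neg, abs_neg] using abs_add_le (a + b) (-c)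
      have hab2 := abs_add_le a b
      have hac := abs_le.1 h1
      have hbc := abs_le.1 h2
      have hcc := abs_le.1 h3
      calc |a + b - c| ≤ |a + b| + |c| := hab
        _ ≤ |a| + |b| + |c| := by linarith
        _ ≤ 3 * C := by linarith
    refine (Finset.sum_le_sum hterm).trans ?_
    simp only [Finset.sum_const, Finset.card_range, nsmul_eq_mul]
    exact le_of_eq (by ring)
  -- off N, the dual sup equals V0 + F0
  have hgF : ∀ ω, ω ∉ N →
      (⨆ π : {h : ℕ → Ω → (Fin l → ℝ) // Admissible μ ℱ T K X 0 y h},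
        ((∑ s ∈ Finset.Ico 0 T,
            (H s (π.1 s ω) (X s ω)
              - V (s + 1) (ctrl y π.1 0 (s + 1) ω) (X (s + 1) ω)
              + condV μ ℱ V X s (ctrl y π.1 0 (s + 1) ω) ω))
          + H T (π.1 T ω) (X T ω)))
      = V 0 y (X 0 ω) + F0 ω := by
    intro ω hω
    have hBdd : BddAbove (Set.range fun π : {h : ℕ → Ω → (Fin l → ℝ) //
        Admissible μ ℱ T K X 0 y h} =>
        ∑ s ∈ Finset.range T,
          (H s (π.1 s ω) (X s ω)
            + condV μ ℱ V X s (ctrl y π.1 0 (s + 1) ω) ω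
            - V s (ctrl y π.1 0 s ω) (X s ω))) := by
      refine ⟨3 * C * T, ?_⟩
      rintro x ⟨π, rfl⟩
      exact (le_abs_self _).trans (hfb ω hω π)
    have h1 : (⨆ π : {h : ℕ → Ω → (Fin l → ℝ) // Admissible μ ℱ T K X 0 y h},
        ((∑ s ∈ Finset.Ico 0 T,
            (H s (π.1 s ω) (X s ω)
              - V (s + 1) (ctrl y π.1 0 (s + 1) ω) (X (s + 1) ω)
              + condV μ ℱ V X s (ctrl y π.1 0 (s + 1) ω) ω))
          + H T (π.1 T ω) (X T ω)))
        = ⨆ π : {h : ℕ → Ω → (Fin l → ℝ) // Admissible μ ℱ T K X 0 y h},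
          ((∑ s ∈ Finset.range T,
            (H s (π.1 s ω) (X s ω)
              + condV μ ℱ V X s (ctrl y π.1 0 (s + 1) ω) ω
              - V s (ctrl y π.1 0 s ω) (X s ω))) + V 0 y (X 0 ω)) :=
      iSup_congr fun π => key ω hω π
    rw [h1, my_ciSup_add hBdd, ← hF0 ω, add_comm]
  -- bound on F0 off N
  have hF0b : ∀ ω, ω ∉ N → |F0 ω| ≤ 3 * C * T := by
    intro ω hω
    have hBdd : BddAbove (Set.range fun π : {h : ℕ → Ω → (Fin l → ℝ) //
        Admissible μ ℱ T K X 0 y h} =>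
        ∑ s ∈ Finset.range T,
          (H s (π.1 s ω) (X s ω)
            + condV μ ℱ V X s (ctrl y π.1 0 (s + 1) ω) ω
            - V s (ctrl y π.1 0 s ω) (X s ω))) := by
      refine ⟨3 * C * T, ?_⟩
      rintro x ⟨π, rfl⟩
      exact (le_abs_self _).trans (hfb ω hω π)
    rw [hF0 ω, abs_le]
    constructor
    · have hlow := (abs_le.1 (hfb ω hω hne.some)).1
      exact hlow.trans (le_ciSup hBdd hne.some)
    · exact ciSup_le fun π => (le_abs_self _).trans (hfb ω hω π)
  -- invariance under MRel, hence measurability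
  have hinv : ∀ ω ω', MRel m0 ω ω' →
      (∀ π : {h : ℕ → Ω → (Fin l → ℝ) // Admissible μ ℱ T K X 0 y h}, ∀ s, π.1 s ω' = π.1 s ω)
      ∧ (∀ s, X s ω' = X s ω)
      ∧ (∀ π : {h : ℕ → Ω → (Fin l → ℝ) // Admissible μ ℱ T K X 0 y h}, ∀ t',
          ctrl y π.1 0 t' ω' = ctrl y π.1 0 t' ω)
      ∧ (∀ s (y' : Fin l → ℝ), condV μ ℱ V X s y' ω' = condV μ ℱ V X s y' ω) := by
    intro ω ω' hr
    have hp : ∀ π : {h : ℕ → Ω → (Fin l → ℝ) // Admissible μ ℱ T K X 0 y h}, ∀ s,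
        π.1 s ω' = π.1 s ω :=
      fun π s => MRel.eq_of_measurable ((π.2.1 s).mono (ℱ.le s) le_rfl) hr
    refine ⟨hp, fun s => MRel.eq_of_measurable ((hX s).mono (ℱ.le s) le_rfl) hr, ?_, ?_⟩
    · intro π t'
      unfold ctrl
      congr 1
      exact Finset.sum_congr rfl fun s _ => hp π s
    · intro s y'
      exact MRel.eq_of_measurable
        (stronglyMeasurable_condExp.measurable.mono (ℱ.le s) le_rfl) hr
  have hGm : Measurable (fun ω =>
      ⨆ π : {h : ℕ → Ω → (Fin l → ℝ) // Admissible μ ℱ T K X 0 y h},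
        ((∑ s ∈ Finset.Ico 0 T,
            (H s (π.1 s ω) (X s ω)
              - V (s + 1) (ctrl y π.1 0 (s + 1) ω) (X (s + 1) ω)
              + condV μ ℱ V X s (ctrl y π.1 0 (s + 1) ω) ω))
          + H T (π.1 T ω) (X T ω))) := by
    apply measurable_of_mrel_s10
    intro ω ω' hr
    obtain ⟨hp, hx, hc, hcv⟩ := hinv ω ω' hr
    exact iSup_congr fun π => by simp only [hp, hx, hc, hcv]
  have hF0m : Measurable F0 := by
    apply measurable_of_mrel_s10
    intro ω ω' hr
    obtain ⟨hp, hx, hc, hcv⟩ := hinv ω ω' hr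
    rw [hF0 ω', hF0 ω]
    exact iSup_congr fun π => by simp only [hp, hx, hc, hcv]
  -- integrability
  have hint : ∀ (f : Ω → ℝ) (B : ℝ), Measurable f → (∀ ω, ω ∉ N → |f ω| ≤ B) →
      Integrable f μ := by
    intro f B hf hb
    refine ⟨hf.aestronglyMeasurable, HasFiniteIntegral.of_bounded (C := B) ?_⟩
    refine ae_iff.2 (measure_mono_null ?_ hN0)
    intro ω hmem
    by_contra hωN
    exact hmem (by simpa [Real.norm_eq_abs] using hb ω hωN)
  have hIntV0 : Integrable (fun ω => V 0 y (X 0 ω)) μ :=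
    hint _ C ((hVmeas 0 y).comp ((hX 0).mono (ℱ.le 0) le_rfl))
      (fun ω _ => hCV 0 y (X 0 ω))
  have hIntF0 : Integrable F0 μ := hint _ (3 * C * T) hF0m hF0b
  -- put everything together
  have hdual : dualEstimate μ ℱ T H K V X 0 y
      = μ[(fun ω => ⨆ π : {h : ℕ → Ω → (Fin l → ℝ) // Admissible μ ℱ T K X 0 y h},
          ((∑ s ∈ Finset.Ico 0 T,
              (H s (π.1 s ω) (X s ω)
                - V (s + 1) (ctrl y π.1 0 (s + 1) ω) (X (s + 1) ω)
                + condV μ ℱ V X s (ctrl y π.1 0 (s + 1) ω) ω))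
            + H T (π.1 T ω) (X T ω))) | ℱ 0] := rfl
  rw [hdual]
  have e1 : (fun ω => ⨆ π : {h : ℕ → Ω → (Fin l → ℝ) // Admissible μ ℱ T K X 0 y h},
      ((∑ s ∈ Finset.Ico 0 T,
          (H s (π.1 s ω) (X s ω)
            - V (s + 1) (ctrl y π.1 0 (s + 1) ω) (X (s + 1) ω)
            + condV μ ℱ V X s (ctrl y π.1 0 (s + 1) ω) ω))
        + H T (π.1 T ω) (X T ω)))
      =ᵐ[μ] (fun ω => V 0 y (X 0 ω)) + F0 := by
    refine ae_iff.2 (measure_mono_null ?_ hN0)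
    intro ω hmem
    by_contra hωN
    exact hmem (by simpa using hgF ω hωN)
  refine (condExp_congr_ae e1).trans ?_
  refine (condExp_add hIntV0 hIntF0 _).trans ?_
  have hsm : StronglyMeasurable[ℱ 0] (fun ω => V 0 y (X 0 ω)) :=
    ((hVmeas 0 y).comp (hX 0)).stronglyMeasurable
  rw [condExp_of_stronglyMeasurable (ℱ.le 0) hsm hIntV0]
  exact Filter.Eventually.of_forall fun ω => rfl
end

section
/- Low-biased estimate from an ε-greedy policy: fix ε > 0 and suppose that for every t < T and every reachable pair (y,x), there exists ĥ_t ∈ K_t(y,x) with H_t(ĥ_t, x) + E[V_{t+1}(y − ĥ_t, X_{t+1}) | X_t = x] ≥ sup_{h ∈ K_t(y,x)} { H_t(h,x) + E[V_{t+1}(y−h, X_{t+1}) | X_t = x] } − ε, where V_t solves the exact dynamic programming equations. Then the induced adapted policy π̂ = (ĥ_0,...,ĥ_T) is admissible and its value satisfies V^{K,*}_0(y_0, x) − (T+1)ε ≤ V^{π̂}_0(y_0, x) ≤ V^{K,*}_0(y_0, x). -/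
open MeasureTheory Finset

section Helpers

variable {Ω : Type*} [Fintype Ω]

lemma measurable_comp_of_fintype {m : MeasurableSpace Ω} {β γ : Type*} [MeasurableSpace β]
    [MeasurableSingletonClass β] [MeasurableSpace γ] {f : Ω → β} (hf : Measurable[m] f)
    (g : β → γ) : Measurable[m] (g ∘ f) := by
  classical
  intro s _
  have h : (g ∘ f) ⁻¹' s = ⋃ ω : Ω, if g (f ω) ∈ s then f ⁻¹' {f ω} else ∅ := by
    ext x
    simp only [Set.mem_preimage, Set.mem_iUnion, Function.comp_apply]
    constructor
    · intro hx
      exact ⟨x, by simp [hx]⟩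
    · rintro ⟨ω, hω⟩
      split_ifs at hω with h
      · simp only [Set.mem_preimage, Set.mem_singleton_iff] at hω
        rw [hω]; exact h
      · simp at hω
  rw [h]
  refine MeasurableSet.iUnion fun ω => ?_
  split_ifs with h
  · exact hf (measurableSet_singleton _)
  · exact MeasurableSet.empty

lemma integrable_of_fintype {m0 : MeasurableSpace Ω} (μ : Measure Ω) [IsFiniteMeasure μ]
    {f : Ω → ℝ} (hf : Measurable f) : Integrable f μ := by
  obtain ⟨C, hC⟩ : ∃ C : ℝ, ∀ ω, ‖f ω‖ ≤ C := by
    rcases isEmpty_or_nonempty Ω with h | h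
    · exact ⟨0, fun ω => isEmptyElim ω⟩
    · exact ⟨Finset.univ.sup' Finset.univ_nonempty fun ω => ‖f ω‖,
        fun ω => Finset.le_sup' (fun ω => ‖f ω‖) (Finset.mem_univ ω)⟩
  exact (integrable_const C).mono' hf.aestronglyMeasurable (Filter.Eventually.of_forall hC)

lemma ae_meas_singleton_ne_zero {m0 : MeasurableSpace Ω} (μ : Measure Ω) :
    ∀ᵐ ω ∂μ, μ {ω} ≠ 0 := by
  rw [ae_iff]
  simp only [ne_eq, not_not]
  have h : {x : Ω | μ {x} = 0} = ⋃ x : {x : Ω // μ {x} = 0}, {(x : Ω)} := by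
    ext y; simp
  rw [h]
  exact measure_iUnion_null fun x => x.2

lemma ae_apply {m0 : MeasurableSpace Ω} {μ : Measure Ω} {p : Ω → Prop}
    (h : ∀ᵐ ω ∂μ, p ω) {ω : Ω} (hω : μ {ω} ≠ 0) : p ω := by
  by_contra hc
  rw [ae_iff] at h
  exact hω (measure_mono_null
    (fun x hx => by rw [Set.mem_singleton_iff] at hx; subst hx; exact hc) h)

lemma bddAbove_biSup {α : Type*} {s : Set α} {f : α → ℝ} {C : ℝ} (hC : 0 ≤ C)
    (hf : ∀ k ∈ s, f k ≤ C) : BddAbove (Set.range fun k => ⨆ _ : k ∈ s, f k) := by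
  refine ⟨C, ?_⟩
  rintro _ ⟨k, rfl⟩
  exact Real.iSup_le (fun h => hf k h) hC

lemma le_biSup_real {α : Type*} {s : Set α} {f : α → ℝ} {C : ℝ} (hC : 0 ≤ C)
    (hf : ∀ k ∈ s, f k ≤ C) {k : α} (hk : k ∈ s) : f k ≤ ⨆ k ∈ s, f k :=
  le_ciSup_of_le (bddAbove_biSup hC hf) k (by rw [ciSup_pos hk])

lemma abs_biSup_le {α : Type*} [Nonempty α] {s : Set α} {f : α → ℝ} {C : ℝ} (hC : 0 ≤ C)
    (hf : ∀ k ∈ s, |f k| ≤ C) : |⨆ k ∈ s, f k| ≤ C := by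
  rw [abs_le]
  constructor
  · obtain ⟨k0⟩ := ‹Nonempty α›
    refine le_trans ?_ (le_ciSup_of_le
      (bddAbove_biSup hC fun k hk => (abs_le.1 (hf k hk)).2) k0 le_rfl)
    by_cases hk : k0 ∈ s
    · rw [ciSup_pos hk]; exact (abs_le.1 (hf k0 hk)).1
    · rw [show (⨆ _ : k0 ∈ s, f k0) = 0 from by
        haveI : IsEmpty (k0 ∈ s) := ⟨hk⟩
        exact Real.iSup_of_isEmpty _]
      linarith
  · exact Real.iSup_le (fun k => Real.iSup_le (fun h => (abs_le.1 (hf k h)).2) hC) hC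

lemma condexp_comp_of_fintype {m0 : MeasurableSpace Ω} (μ : Measure Ω) [IsFiniteMeasure μ]
    {m : MeasurableSpace Ω} (hm : m ≤ m0) {E : Type*} [MeasurableSpace E]
    [MeasurableSingletonClass E] {Z : Ω → E} (hZ : Measurable[m] Z)
    (F : E → Ω → ℝ) (hF : ∀ v, Measurable[m0] (F v)) :
    μ[(fun ω => F (Z ω) ω) | m] =ᵐ[μ] fun ω => (μ[F (Z ω) | m]) ω := by
  classical
  set R : Finset E := Finset.univ.image Z with hR
  have key : ∀ (g : E → Ω → ℝ) (ω : Ω),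
      ∑ v ∈ R, Set.indicator (Z ⁻¹' {v}) (g v) ω = g (Z ω) ω := by
    intro g ω
    rw [Finset.sum_eq_single (Z ω)]
    · exact Set.indicator_of_mem (by simp) _
    · intro v hv hne
      exact Set.indicator_of_notMem (by simp [Ne.symm hne]) _
    · intro hmem
      exact absurd (Finset.mem_image_of_mem Z (Finset.mem_univ ω)) hmem
  have h1 : (fun ω => F (Z ω) ω) = ∑ v ∈ R, Set.indicator (Z ⁻¹' {v}) (F v) := by
    funext ω
    rw [Finset.sum_apply]
    exact (key F ω).symm
  rw [h1]
  have hms : ∀ v : E, MeasurableSet[m0] (Z ⁻¹' {v}) := fun v => hm _ (hZ (measurableSet_singleton v))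
  refine (condExp_finset_sum (m := m) fun v _ =>
    Integrable.indicator (μ := μ) (integrable_of_fintype μ (hF v)) (hms v)).trans ?_
  have hae : ∀ᵐ ω ∂μ, ∀ v : R, (μ[Set.indicator (Z ⁻¹' {(v : E)}) (F v) | m]) ω
      = Set.indicator (Z ⁻¹' {(v : E)}) (μ[F v | m]) ω :=
    ae_all_iff.2 fun v => condExp_indicator (integrable_of_fintype μ (hF v))
      (hZ (measurableSet_singleton (v : E)))
  filter_upwards [hae] with ω hω
  rw [Finset.sum_apply]
  calc ∑ v ∈ R, (μ[Set.indicator (Z ⁻¹' {v}) (F v) | m]) ω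
      = ∑ v ∈ R, Set.indicator (Z ⁻¹' {v}) (μ[F v | m]) ω :=
        Finset.sum_congr rfl fun v hv => hω ⟨v, hv⟩
    _ = (μ[F (Z ω) | m]) ω := key _ ω

end Helpers

section Main

variable {Ω : Type*} [Fintype Ω] {m0 : MeasurableSpace Ω}
  {μ : Measure Ω} [IsProbabilityMeasure μ] {ℱ : Filtration ℕ m0}
  {l d : ℕ} {T : ℕ}
  {X : ℕ → Ω → (Fin d → ℝ)}
  {H : ℕ → (Fin l → ℝ) → (Fin d → ℝ) → ℝ}
  {K : ℕ → (Fin l → ℝ) → (Fin d → ℝ) → Set (Fin l → ℝ)}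
  {C : ℝ} {V G : ℕ → (Fin l → ℝ) → (Fin d → ℝ) → ℝ}
  {y0 : Fin l → ℝ}

lemma meas_pair_comp {m : MeasurableSpace Ω} {f : Ω → (Fin l → ℝ)} {g : Ω → (Fin d → ℝ)}
    (hf : Measurable[m] f) (hg : Measurable[m] g) (F : (Fin l → ℝ) → (Fin d → ℝ) → ℝ) :
    Measurable[m] fun ω => F (f ω) (g ω) :=
  measurable_comp_of_fintype (hf.prodMk hg) fun p => F p.1 p.2

lemma meas_ctrl {h : ℕ → Ω → (Fin l → ℝ)} (hhm : ∀ s, Measurable[ℱ s] (h s))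
    {u t : ℕ} (hut : u ≤ t + 1) : Measurable[ℱ t] fun ω => ctrl y0 h 0 u ω := by
  show Measurable[ℱ t] fun ω => y0 - ∑ s ∈ Finset.Ico 0 u, h s ω
  refine Measurable.sub measurable_const (Finset.measurable_sum _ fun s hs => ?_)
  have hst : s ≤ t := by simp only [Finset.mem_Ico] at hs; omega
  exact (hhm s).mono (ℱ.mono hst) le_rfl

lemma ctrl_succ_s15 (h : ℕ → Ω → (Fin l → ℝ)) (t : ℕ) (ω : Ω) :
    ctrl y0 h 0 (t + 1) ω = ctrl y0 h 0 t ω - h t ω := by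
  show y0 - _ = (y0 - _) - _
  rw [Finset.sum_Ico_succ_top (Nat.zero_le t)]
  abel

lemma ctrl_zero_s15 (h : ℕ → Ω → (Fin l → ℝ)) (ω : Ω) : ctrl y0 h 0 0 ω = y0 := by
  show y0 - _ = y0
  simp

lemma Vbound
    (hX : ∀ t, Measurable[ℱ t] (X t))
    (hC : ∀ s (hv : Fin l → ℝ) (x : Fin d → ℝ), |H s hv x| ≤ C)
    (hG : ∀ t (y' : Fin l → ℝ), (fun ω => G t y' (X t ω)) =ᵐ[μ]
      μ[fun ω => V (t + 1) y' (X (t + 1) ω) | ℱ t])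
    (hBell : ∀ t, t < T → ∀ (y' : Fin l → ℝ) (x : Fin d → ℝ),
      V t y' x = ⨆ h ∈ K t y' x, (H t h x + G t (y' - h) x))
    (hBellT : ∀ (y' : Fin l → ℝ) (x : Fin d → ℝ), V T y' x = ⨆ h ∈ K T y' x, H T h x) :
    ∀ n t, t + n = T → ∀ ω : Ω, μ {ω} ≠ 0 → ∀ y' : Fin l → ℝ,
      |V t y' (X t ω)| ≤ ((n : ℝ) + 1) * C := by
  have hC0 : 0 ≤ C := le_trans (abs_nonneg _) (hC 0 0 0)
  intro n
  induction n with
  | zero =>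
    intro t ht ω hω y'
    obtain rfl : t = T := by omega
    rw [hBellT]
    simpa using abs_biSup_le hC0 fun k _ => hC _ k (X _ ω)
  | succ n ih =>
    intro t ht ω hω y'
    have htT : t < T := by omega
    have hGb : ∀ v, |G t v (X t ω)| ≤ ((n : ℝ) + 1) * C := by
      intro v
      have hVb : ∀ᵐ ω' ∂μ, |V (t + 1) v (X (t + 1) ω')| ≤ ((n : ℝ) + 1) * C := by
        filter_upwards [ae_meas_singleton_ne_zero μ] with ω' hω'
        exact ih (t + 1) (by omega) ω' hω' v
      have hbd : ∀ᵐ ω' ∂μ,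
          |(μ[fun ω' => V (t + 1) v (X (t + 1) ω') | ℱ t]) ω'| ≤
            ((⟨((n : ℝ) + 1) * C, by positivity⟩ : NNReal) : ℝ) :=
        ae_bdd_condExp_of_ae_bdd (by filter_upwards [hVb] with ω' hh; exact hh)
      have hcomb := ae_apply ((hG t v).and hbd) hω
      calc |G t v (X t ω)|
          = |(μ[fun ω' => V (t + 1) v (X (t + 1) ω') | ℱ t]) ω| := congrArg abs hcomb.1
        _ ≤ ((n : ℝ) + 1) * C := hcomb.2
    rw [hBell t htT]
    have hb : |⨆ k ∈ K t y' (X t ω), (H t k (X t ω) + G t (y' - k) (X t ω))|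
        ≤ C + ((n : ℝ) + 1) * C := by
      refine abs_biSup_le (by positivity) fun k _ => ?_
      calc |H t k (X t ω) + G t (y' - k) (X t ω)|
          ≤ |H t k (X t ω)| + |G t (y' - k) (X t ω)| := abs_add_le _ _
        _ ≤ C + ((n : ℝ) + 1) * C := add_le_add (hC _ _ _) (hGb _)
    refine hb.trans (le_of_eq ?_)
    push_cast
    ring

lemma Gbound
    (hX : ∀ t, Measurable[ℱ t] (X t))
    (hC : ∀ s (hv : Fin l → ℝ) (x : Fin d → ℝ), |H s hv x| ≤ C)
    (hG : ∀ t (y' : Fin l → ℝ), (fun ω => G t y' (X t ω)) =ᵐ[μ]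
      μ[fun ω => V (t + 1) y' (X (t + 1) ω) | ℱ t])
    (hBell : ∀ t, t < T → ∀ (y' : Fin l → ℝ) (x : Fin d → ℝ),
      V t y' x = ⨆ h ∈ K t y' x, (H t h x + G t (y' - h) x))
    (hBellT : ∀ (y' : Fin l → ℝ) (x : Fin d → ℝ), V T y' x = ⨆ h ∈ K T y' x, H T h x) :
    ∀ t, t < T → ∀ ω : Ω, μ {ω} ≠ 0 → ∀ v,
      |G t v (X t ω)| ≤ (((T - t : ℕ) : ℝ)) * C := by
  intro t htT ω hω v
  have hC0 : 0 ≤ C := le_trans (abs_nonneg _) (hC 0 0 0)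
  have hVb : ∀ᵐ ω' ∂μ, |V (t + 1) v (X (t + 1) ω')| ≤ (((T - t - 1 : ℕ) : ℝ) + 1) * C := by
    filter_upwards [ae_meas_singleton_ne_zero μ] with ω' hω'
    exact Vbound hX hC hG hBell hBellT (T - t - 1) (t + 1) (by omega) ω' hω' v
  have hbd : ∀ᵐ ω' ∂μ,
      |(μ[fun ω' => V (t + 1) v (X (t + 1) ω') | ℱ t]) ω'| ≤
        ((⟨(((T - t - 1 : ℕ) : ℝ) + 1) * C, by positivity⟩ : NNReal) : ℝ) :=
    ae_bdd_condExp_of_ae_bdd (by filter_upwards [hVb] with ω' hh; exact hh)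
  have hcomb := ae_apply ((hG t v).and hbd) hω
  have heq : (((T - t - 1 : ℕ) : ℝ) + 1) * C = ((T - t : ℕ) : ℝ) * C := by
    rw [show ((T - t - 1 : ℕ) : ℝ) + 1 = ((T - t : ℕ) : ℝ) by
      rw [show (T - t : ℕ) = (T - t - 1) + 1 by omega]; push_cast; ring]
  calc |G t v (X t ω)|
      = |(μ[fun ω' => V (t + 1) v (X (t + 1) ω') | ℱ t]) ω| := congrArg abs hcomb.1
    _ ≤ (((T - t - 1 : ℕ) : ℝ) + 1) * C := hcomb.2
    _ = _ := heq

lemma upper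
    (hX : ∀ t, Measurable[ℱ t] (X t))
    (hC : ∀ s (hv : Fin l → ℝ) (x : Fin d → ℝ), |H s hv x| ≤ C)
    (hG : ∀ t (y' : Fin l → ℝ), (fun ω => G t y' (X t ω)) =ᵐ[μ]
      μ[fun ω => V (t + 1) y' (X (t + 1) ω) | ℱ t])
    (hBell : ∀ t, t < T → ∀ (y' : Fin l → ℝ) (x : Fin d → ℝ),
      V t y' x = ⨆ h ∈ K t y' x, (H t h x + G t (y' - h) x))
    (hBellT : ∀ (y' : Fin l → ℝ) (x : Fin d → ℝ), V T y' x = ⨆ h ∈ K T y' x, H T h x)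
    (h : ℕ → Ω → (Fin l → ℝ)) (hhm : ∀ s, Measurable[ℱ s] (h s))
    (hadm : ∀ᵐ ω ∂μ, ∀ s, s ≤ T → h s ω ∈ K s (ctrl y0 h 0 s ω) (X s ω)) :
    ∀ n t, t + n = T →
      μ[(fun ω => ∑ s ∈ Finset.Icc t T, H s (h s ω) (X s ω)) | ℱ t]
        ≤ᵐ[μ] fun ω => V t (ctrl y0 h 0 t ω) (X t ω) := by
  have hC0 : 0 ≤ C := le_trans (abs_nonneg _) (hC 0 0 0)
  intro n
  induction n with
  | zero =>
    intro t ht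
    obtain rfl : t = T := by omega
    have hΦ : (fun ω => ∑ s ∈ Finset.Icc t t, H s (h s ω) (X s ω))
        = fun ω => H t (h t ω) (X t ω) := by funext ω; simp
    rw [hΦ]
    have hm1 : Measurable[ℱ t] fun ω => H t (h t ω) (X t ω) :=
      meas_pair_comp (hhm t) (hX t) (H t)
    rw [condExp_of_stronglyMeasurable (ℱ.le t) hm1.stronglyMeasurable
      (integrable_of_fintype μ (hm1.mono (ℱ.le t) le_rfl))]
    filter_upwards [hadm] with ω hω
    rw [hBellT]
    exact le_biSup_real (f := fun k => H t k (X t ω)) hC0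
      (fun k _ => le_trans (le_abs_self _) (hC t k (X t ω))) (hω t le_rfl)
  | succ n ih =>
    intro t ht
    have htT : t < T := by omega
    have hIH := ih (t + 1) (by omega)
    -- measurability and integrability facts
    have hZ : Measurable[ℱ t] fun ω => ctrl y0 h 0 (t + 1) ω := meas_ctrl hhm le_rfl
    have hF : ∀ v : Fin l → ℝ, Measurable[m0] fun ω => V (t + 1) v (X (t + 1) ω) :=
      fun v => ((measurable_comp_of_fintype (hX (t + 1)) fun x => V (t + 1) v x).mono
        (ℱ.le (t + 1)) le_rfl)
    have hWm : Measurable[m0] fun ω => V (t + 1) (ctrl y0 h 0 (t + 1) ω) (X (t + 1) ω) :=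
      (meas_pair_comp (meas_ctrl hhm (by omega)) (hX (t + 1)) (V (t + 1))).mono
        (ℱ.le (t + 1)) le_rfl
    have hAm : Measurable[ℱ t] fun ω => H t (h t ω) (X t ω) :=
      meas_pair_comp (hhm t) (hX t) (H t)
    have hΦ1m : Measurable[m0] fun ω => ∑ s ∈ Finset.Icc (t + 1) T, H s (h s ω) (X s ω) := by
      refine Finset.measurable_sum _ fun s _ => ?_
      exact (meas_pair_comp (hhm s) (hX s) (H s)).mono (ℱ.le s) le_rfl
    have hIntA : Integrable (fun ω => H t (h t ω) (X t ω)) μ :=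
      integrable_of_fintype μ (hAm.mono (ℱ.le t) le_rfl)
    have hIntΦ1 : Integrable (fun ω => ∑ s ∈ Finset.Icc (t + 1) T, H s (h s ω) (X s ω)) μ :=
      integrable_of_fintype μ hΦ1m
    have hIntW : Integrable (fun ω => V (t + 1) (ctrl y0 h 0 (t + 1) ω) (X (t + 1) ω)) μ :=
      integrable_of_fintype μ hWm
    -- splitting the sum
    have hsplit : (fun ω => ∑ s ∈ Finset.Icc t T, H s (h s ω) (X s ω))
        = (fun ω => H t (h t ω) (X t ω))
          + fun ω => ∑ s ∈ Finset.Icc (t + 1) T, H s (h s ω) (X s ω) := by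
      funext ω
      have hins : Finset.Icc t T = insert t (Finset.Icc (t + 1) T) := by
        ext x; simp only [Finset.mem_Icc, Finset.mem_insert]; omega
      simp only [Pi.add_apply]
      rw [hins, Finset.sum_insert (by simp)]
    rw [hsplit]
    -- the chain of conditional-expectation facts
    have e1 := condExp_add (μ := μ) (m := ℱ t) hIntA hIntΦ1
    have eA : μ[(fun ω => H t (h t ω) (X t ω)) | ℱ t] = fun ω => H t (h t ω) (X t ω) :=
      condExp_of_stronglyMeasurable (ℱ.le t) hAm.stronglyMeasurable hIntA
    have e2 := (condExp_condExp_of_le (ℱ.mono (Nat.le_succ t)) (ℱ.le (t + 1))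
      (f := fun ω => ∑ s ∈ Finset.Icc (t + 1) T, H s (h s ω) (X s ω)) (μ := μ)).symm
    have e3 := condExp_mono (μ := μ) (m := ℱ t) integrable_condExp hIntW hIH
    have e4 := condexp_comp_of_fintype μ (ℱ.le t) hZ
      (fun v ω => V (t + 1) v (X (t + 1) ω)) hF
    have e5 : ∀ᵐ ω ∂μ, ∀ v : (Finset.univ.image fun ω => ctrl y0 h 0 (t + 1) ω),
        (μ[fun ω => V (t + 1) (v : Fin l → ℝ) (X (t + 1) ω) | ℱ t]) ω
          = G t (v : Fin l → ℝ) (X t ω) :=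
      ae_all_iff.2 fun v => (hG t (v : Fin l → ℝ)).symm
    filter_upwards [e1, e2, e3, e4, e5, hadm, ae_meas_singleton_ne_zero μ]
      with ω h1 h2 h3 h4 h5 hKω hωpos
    have step1 : (μ[(fun ω => H t (h t ω) (X t ω))
          + fun ω => ∑ s ∈ Finset.Icc (t + 1) T, H s (h s ω) (X s ω) | ℱ t]) ω
        = H t (h t ω) (X t ω)
          + (μ[fun ω => ∑ s ∈ Finset.Icc (t + 1) T, H s (h s ω) (X s ω) | ℱ t]) ω := by
      rw [h1, Pi.add_apply, eA]
    have step2 : (μ[fun ω => ∑ s ∈ Finset.Icc (t + 1) T, H s (h s ω) (X s ω) | ℱ t]) ω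
        ≤ G t (ctrl y0 h 0 (t + 1) ω) (X t ω) := by
      calc (μ[fun ω => ∑ s ∈ Finset.Icc (t + 1) T, H s (h s ω) (X s ω) | ℱ t]) ω
          = (μ[μ[fun ω => ∑ s ∈ Finset.Icc (t + 1) T, H s (h s ω) (X s ω) | ℱ (t + 1)]
              | ℱ t]) ω := h2
        _ ≤ (μ[fun ω => V (t + 1) (ctrl y0 h 0 (t + 1) ω) (X (t + 1) ω) | ℱ t]) ω := h3
        _ = (μ[fun ω' => V (t + 1) (ctrl y0 h 0 (t + 1) ω) (X (t + 1) ω') | ℱ t]) ω := h4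
        _ = G t (ctrl y0 h 0 (t + 1) ω) (X t ω) :=
            h5 ⟨_, Finset.mem_image_of_mem _ (Finset.mem_univ ω)⟩
    have hGb := Gbound hX hC hG hBell hBellT t htT ω hωpos
    have step3 : H t (h t ω) (X t ω) + G t (ctrl y0 h 0 t ω - h t ω) (X t ω)
        ≤ V t (ctrl y0 h 0 t ω) (X t ω) := by
      rw [hBell t htT]
      exact le_biSup_real
        (f := fun k => H t k (X t ω) + G t (ctrl y0 h 0 t ω - k) (X t ω))
        (C := C + ((T - t : ℕ) : ℝ) * C) (by positivity)
        (fun k _ => add_le_add (le_trans (le_abs_self _) (hC _ _ _))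
          (le_trans (le_abs_self _) (hGb _))) (hKω t htT.le)
    calc (μ[(fun ω => H t (h t ω) (X t ω))
          + fun ω => ∑ s ∈ Finset.Icc (t + 1) T, H s (h s ω) (X s ω) | ℱ t]) ω
        = H t (h t ω) (X t ω)
          + (μ[fun ω => ∑ s ∈ Finset.Icc (t + 1) T, H s (h s ω) (X s ω) | ℱ t]) ω := step1
      _ ≤ H t (h t ω) (X t ω) + G t (ctrl y0 h 0 (t + 1) ω) (X t ω) :=
          add_le_add_right step2 _
      _ = H t (h t ω) (X t ω) + G t (ctrl y0 h 0 t ω - h t ω) (X t ω) := by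
          rw [ctrl_succ_s15]
      _ ≤ V t (ctrl y0 h 0 t ω) (X t ω) := step3

lemma lower
    (hX : ∀ t, Measurable[ℱ t] (X t))
    (hC : ∀ s (hv : Fin l → ℝ) (x : Fin d → ℝ), |H s hv x| ≤ C)
    (hG : ∀ t (y' : Fin l → ℝ), (fun ω => G t y' (X t ω)) =ᵐ[μ]
      μ[fun ω => V (t + 1) y' (X (t + 1) ω) | ℱ t])
    (hBell : ∀ t, t < T → ∀ (y' : Fin l → ℝ) (x : Fin d → ℝ),
      V t y' x = ⨆ h ∈ K t y' x, (H t h x + G t (y' - h) x))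
    (hBellT : ∀ (y' : Fin l → ℝ) (x : Fin d → ℝ), V T y' x = ⨆ h ∈ K T y' x, H T h x)
    {ε : ℝ}
    (h : ℕ → Ω → (Fin l → ℝ)) (hhm : ∀ s, Measurable[ℱ s] (h s))
    (hgreedy : ∀ s, s < T → ∀ᵐ ω ∂μ,
      h s ω ∈ K s (ctrl y0 h 0 s ω) (X s ω)
      ∧ (⨆ k ∈ K s (ctrl y0 h 0 s ω) (X s ω),
            (H s k (X s ω) + G s (ctrl y0 h 0 s ω - k) (X s ω))) - ε
          ≤ H s (h s ω) (X s ω) + G s (ctrl y0 h 0 s ω - h s ω) (X s ω))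
    (hgreedyT : ∀ᵐ ω ∂μ,
      h T ω ∈ K T (ctrl y0 h 0 T ω) (X T ω)
      ∧ (⨆ k ∈ K T (ctrl y0 h 0 T ω) (X T ω), H T k (X T ω)) - ε
          ≤ H T (h T ω) (X T ω)) :
    ∀ n t, t + n = T →
      (fun ω => V t (ctrl y0 h 0 t ω) (X t ω) - ((n : ℝ) + 1) * ε)
        ≤ᵐ[μ] μ[(fun ω => ∑ s ∈ Finset.Icc t T, H s (h s ω) (X s ω)) | ℱ t] := by
  intro n
  induction n with
  | zero =>
    intro t ht
    obtain rfl : t = T := by omega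
    have hΦ : (fun ω => ∑ s ∈ Finset.Icc t t, H s (h s ω) (X s ω))
        = fun ω => H t (h t ω) (X t ω) := by funext ω; simp
    rw [hΦ]
    have hm1 : Measurable[ℱ t] fun ω => H t (h t ω) (X t ω) :=
      meas_pair_comp (hhm t) (hX t) (H t)
    rw [condExp_of_stronglyMeasurable (ℱ.le t) hm1.stronglyMeasurable
      (integrable_of_fintype μ (hm1.mono (ℱ.le t) le_rfl))]
    filter_upwards [hgreedyT] with ω hω
    rw [hBellT]
    have := hω.2
    push_cast
    linarith
  | succ n ih =>
    intro t ht
    have htT : t < T := by omega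
    have hIH := ih (t + 1) (by omega)
    have hZ : Measurable[ℱ t] fun ω => ctrl y0 h 0 (t + 1) ω := meas_ctrl hhm le_rfl
    have hF : ∀ v : Fin l → ℝ, Measurable[m0] fun ω => V (t + 1) v (X (t + 1) ω) :=
      fun v => ((measurable_comp_of_fintype (hX (t + 1)) fun x => V (t + 1) v x).mono
        (ℱ.le (t + 1)) le_rfl)
    have hWm : Measurable[m0] fun ω => V (t + 1) (ctrl y0 h 0 (t + 1) ω) (X (t + 1) ω) :=
      (meas_pair_comp (meas_ctrl hhm (by omega)) (hX (t + 1)) (V (t + 1))).mono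
        (ℱ.le (t + 1)) le_rfl
    have hAm : Measurable[ℱ t] fun ω => H t (h t ω) (X t ω) :=
      meas_pair_comp (hhm t) (hX t) (H t)
    have hΦ1m : Measurable[m0] fun ω => ∑ s ∈ Finset.Icc (t + 1) T, H s (h s ω) (X s ω) := by
      refine Finset.measurable_sum _ fun s _ => ?_
      exact (meas_pair_comp (hhm s) (hX s) (H s)).mono (ℱ.le s) le_rfl
    have hIntA : Integrable (fun ω => H t (h t ω) (X t ω)) μ :=
      integrable_of_fintype μ (hAm.mono (ℱ.le t) le_rfl)
    have hIntΦ1 : Integrable (fun ω => ∑ s ∈ Finset.Icc (t + 1) T, H s (h s ω) (X s ω)) μ :=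
      integrable_of_fintype μ hΦ1m
    have hIntW : Integrable (fun ω => V (t + 1) (ctrl y0 h 0 (t + 1) ω) (X (t + 1) ω)) μ :=
      integrable_of_fintype μ hWm
    have hsplit : (fun ω => ∑ s ∈ Finset.Icc t T, H s (h s ω) (X s ω))
        = (fun ω => H t (h t ω) (X t ω))
          + fun ω => ∑ s ∈ Finset.Icc (t + 1) T, H s (h s ω) (X s ω) := by
      funext ω
      have hins : Finset.Icc t T = insert t (Finset.Icc (t + 1) T) := by
        ext x; simp only [Finset.mem_Icc, Finset.mem_insert]; omega
      simp only [Pi.add_apply]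
      rw [hins, Finset.sum_insert (by simp)]
    rw [hsplit]
    have e1 := condExp_add (μ := μ) (m := ℱ t) hIntA hIntΦ1
    have eA : μ[(fun ω => H t (h t ω) (X t ω)) | ℱ t] = fun ω => H t (h t ω) (X t ω) :=
      condExp_of_stronglyMeasurable (ℱ.le t) hAm.stronglyMeasurable hIntA
    have e2 := condExp_condExp_of_le (ℱ.mono (Nat.le_succ t)) (ℱ.le (t + 1))
      (f := fun ω => ∑ s ∈ Finset.Icc (t + 1) T, H s (h s ω) (X s ω)) (μ := μ)
    -- from the induction hypothesis: condexp of W - c is below the tower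
    have hsub : Integrable (fun ω => V (t + 1) (ctrl y0 h 0 (t + 1) ω) (X (t + 1) ω)
        - ((n : ℝ) + 1) * ε) μ := hIntW.sub (integrable_const _)
    have e3 : μ[(fun ω => V (t + 1) (ctrl y0 h 0 (t + 1) ω) (X (t + 1) ω)
          - ((n : ℝ) + 1) * ε) | ℱ t]
        ≤ᵐ[μ] μ[μ[fun ω => ∑ s ∈ Finset.Icc (t + 1) T, H s (h s ω) (X s ω) | ℱ (t + 1)]
          | ℱ t] :=
      condExp_mono hsub integrable_condExp hIH
    have e3' : μ[(fun ω => V (t + 1) (ctrl y0 h 0 (t + 1) ω) (X (t + 1) ω)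
          - ((n : ℝ) + 1) * ε) | ℱ t]
        =ᵐ[μ] μ[(fun ω => V (t + 1) (ctrl y0 h 0 (t + 1) ω) (X (t + 1) ω)) | ℱ t]
          - fun _ => ((n : ℝ) + 1) * ε := by
      have hs := condExp_sub (μ := μ) (m := ℱ t) hIntW
        (integrable_const (((n : ℝ) + 1) * ε))
      rw [condExp_const (ℱ.le t)] at hs
      exact hs
    have e4 := condexp_comp_of_fintype μ (ℱ.le t) hZ
      (fun v ω => V (t + 1) v (X (t + 1) ω)) hF
    have e5 : ∀ᵐ ω ∂μ, ∀ v : (Finset.univ.image fun ω => ctrl y0 h 0 (t + 1) ω),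
        (μ[fun ω => V (t + 1) (v : Fin l → ℝ) (X (t + 1) ω) | ℱ t]) ω
          = G t (v : Fin l → ℝ) (X t ω) :=
      ae_all_iff.2 fun v => (hG t (v : Fin l → ℝ)).symm
    filter_upwards [e1, e2, e3, e3', e4, e5, hgreedy t htT]
      with ω h1 h2 h3 h3' h4 h5 hgω
    have step1 : (μ[(fun ω => H t (h t ω) (X t ω))
          + fun ω => ∑ s ∈ Finset.Icc (t + 1) T, H s (h s ω) (X s ω) | ℱ t]) ω
        = H t (h t ω) (X t ω)
          + (μ[fun ω => ∑ s ∈ Finset.Icc (t + 1) T, H s (h s ω) (X s ω) | ℱ t]) ω := by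
      rw [h1, Pi.add_apply, eA]
    have step2 : G t (ctrl y0 h 0 (t + 1) ω) (X t ω) - ((n : ℝ) + 1) * ε
        ≤ (μ[fun ω => ∑ s ∈ Finset.Icc (t + 1) T, H s (h s ω) (X s ω) | ℱ t]) ω := by
      have hg1 : G t (ctrl y0 h 0 (t + 1) ω) (X t ω)
          = (μ[fun ω' => V (t + 1) (ctrl y0 h 0 (t + 1) ω) (X (t + 1) ω') | ℱ t]) ω :=
        (h5 ⟨_, Finset.mem_image_of_mem _ (Finset.mem_univ ω)⟩).symm
      have hg2 : (μ[fun ω' => V (t + 1) (ctrl y0 h 0 (t + 1) ω) (X (t + 1) ω') | ℱ t]) ω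
          = (μ[fun ω => V (t + 1) (ctrl y0 h 0 (t + 1) ω) (X (t + 1) ω) | ℱ t]) ω := h4.symm
      have hg3 : (μ[(fun ω => V (t + 1) (ctrl y0 h 0 (t + 1) ω) (X (t + 1) ω)
            - ((n : ℝ) + 1) * ε) | ℱ t]) ω
          = (μ[fun ω => V (t + 1) (ctrl y0 h 0 (t + 1) ω) (X (t + 1) ω) | ℱ t]) ω
            - ((n : ℝ) + 1) * ε := h3'
      have hg4 := h3
      rw [hg3] at hg4
      rw [hg1, hg2]
      calc (μ[fun ω => V (t + 1) (ctrl y0 h 0 (t + 1) ω) (X (t + 1) ω) | ℱ t]) ω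
            - ((n : ℝ) + 1) * ε
          ≤ (μ[μ[fun ω => ∑ s ∈ Finset.Icc (t + 1) T, H s (h s ω) (X s ω) | ℱ (t + 1)]
              | ℱ t]) ω := hg4
        _ = (μ[fun ω => ∑ s ∈ Finset.Icc (t + 1) T, H s (h s ω) (X s ω) | ℱ t]) ω := h2
    have step3 : V t (ctrl y0 h 0 t ω) (X t ω) - ε
        ≤ H t (h t ω) (X t ω) + G t (ctrl y0 h 0 (t + 1) ω) (X t ω) := by
      rw [hBell t htT, ctrl_succ_s15]
      exact hgω.2
    have goal1 : V t (ctrl y0 h 0 t ω) (X t ω) - (((n : ℕ) + 1 : ℝ) + 1) * ε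
        ≤ (μ[(fun ω => H t (h t ω) (X t ω))
          + fun ω => ∑ s ∈ Finset.Icc (t + 1) T, H s (h s ω) (X s ω) | ℱ t]) ω := by
      rw [step1]
      linarith
    refine le_trans (le_of_eq ?_) goal1
    push_cast
    ring

end Main

/-- an ε-greedy policy with respect to the exact dynamic
programming solution is admissible and loses at most `(T+1)ε` of value. -/
theorem eps_greedy_low_biased
    {Ω : Type*} [Fintype Ω] {m0 : MeasurableSpace Ω}
    (μ : Measure Ω) [IsProbabilityMeasure μ] (ℱ : Filtration ℕ m0)
    {l d : ℕ} (T : ℕ)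
    (X : ℕ → Ω → (Fin d → ℝ)) (hX : ∀ t, Measurable[ℱ t] (X t))
    (H : ℕ → (Fin l → ℝ) → (Fin d → ℝ) → ℝ)
    (K : ℕ → (Fin l → ℝ) → (Fin d → ℝ) → Set (Fin l → ℝ))
    (C : ℝ) (hC : ∀ s (hv : Fin l → ℝ) (x : Fin d → ℝ), |H s hv x| ≤ C)
    (V G : ℕ → (Fin l → ℝ) → (Fin d → ℝ) → ℝ)
    -- `G_t(y', X_t) = E[V_{t+1}(y', X_{t+1}) | X_t]`
    (hG : ∀ t (y' : Fin l → ℝ), (fun ω => G t y' (X t ω)) =ᵐ[μ]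
      μ[fun ω => V (t + 1) y' (X (t + 1) ω) | ℱ t])
    -- `V` solves the exact dynamic programming equations
    (hBell : ∀ t, t < T → ∀ (y' : Fin l → ℝ) (x : Fin d → ℝ),
      V t y' x = ⨆ h ∈ K t y' x, (H t h x + G t (y' - h) x))
    (hBellT : ∀ (y' : Fin l → ℝ) (x : Fin d → ℝ), V T y' x = ⨆ h ∈ K T y' x, H T h x)
    (ε : ℝ) (hε : 0 < ε)
    (y0 : Fin l → ℝ)
    (piHat : ℕ → Ω → (Fin l → ℝ))
    (hmeas : ∀ s, Measurable[ℱ s] (piHat s))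
    -- ε-greedy selection at each time `s < T`
    (hgreedy : ∀ s, s < T → ∀ᵐ ω ∂μ,
      piHat s ω ∈ K s (ctrl y0 piHat 0 s ω) (X s ω)
      ∧ (⨆ h ∈ K s (ctrl y0 piHat 0 s ω) (X s ω),
            (H s h (X s ω) + G s (ctrl y0 piHat 0 s ω - h) (X s ω))) - ε
          ≤ H s (piHat s ω) (X s ω)
            + G s (ctrl y0 piHat 0 s ω - piHat s ω) (X s ω))
    -- ε-greedy selection at the terminal time
    (hgreedyT : ∀ᵐ ω ∂μ,
      piHat T ω ∈ K T (ctrl y0 piHat 0 T ω) (X T ω)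
      ∧ (⨆ h ∈ K T (ctrl y0 piHat 0 T ω) (X T ω), H T h (X T ω)) - ε
          ≤ H T (piHat T ω) (X T ω)) :
    Admissible μ ℱ T K X 0 y0 piHat
    ∧ (∀ᵐ ω ∂μ,
        valueFn μ ℱ T H K X 0 y0 ω - (T + 1 : ℝ) * ε
            ≤ polValue μ ℱ T H X 0 piHat ω
        ∧ polValue μ ℱ T H X 0 piHat ω ≤ valueFn μ ℱ T H K X 0 y0 ω) := by
  have hC0 : 0 ≤ C := le_trans (abs_nonneg _) (hC 0 0 0)
  have hadm : Admissible μ ℱ T K X 0 y0 piHat := by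
    refine ⟨hmeas, ?_⟩
    have h1 : ∀ᵐ ω ∂μ, ∀ s : Fin (T + 1), (s : ℕ) < T →
        piHat s ω ∈ K s (ctrl y0 piHat 0 s ω) (X s ω) := by
      refine ae_all_iff.2 fun s => ?_
      by_cases hs : (s : ℕ) < T
      · filter_upwards [hgreedy s hs] with ω hω _
        exact hω.1
      · filter_upwards with ω hcon
        omega
    filter_upwards [h1, hgreedyT] with ω hω hωT
    intro s _ hsT
    rcases eq_or_lt_of_le hsT with rfl | hlt
    · exact hωT.1
    · exact hω ⟨s, by omega⟩ hlt
  have hadm' : ∀ π : ℕ → Ω → (Fin l → ℝ), Admissible μ ℱ T K X 0 y0 π →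
      ∀ᵐ ω ∂μ, ∀ s, s ≤ T → π s ω ∈ K s (ctrl y0 π 0 s ω) (X s ω) :=
    fun π hπ => hπ.2.mono fun ω hω s hs => hω s (Nat.zero_le s) hs
  have hU : ∀ π : {h : ℕ → Ω → (Fin l → ℝ) // Admissible μ ℱ T K X 0 y0 h},
      ∀ ω : Ω, μ {ω} ≠ 0 → polValue μ ℱ T H X 0 π.1 ω ≤ V 0 y0 (X 0 ω) := by
    intro π ω hω
    have h1 := upper hX hC hG hBell hBellT π.1 π.2.1 (hadm' π.1 π.2) T 0 (by omega)
    have h2 : (μ[(fun ω => ∑ s ∈ Finset.Icc 0 T, H s (π.1 s ω) (X s ω)) | ℱ 0]) ω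
        ≤ V 0 (ctrl y0 π.1 0 0 ω) (X 0 ω) := ae_apply h1 hω
    rw [ctrl_zero_s15] at h2
    exact h2
  have hPB : ∀ π : {h : ℕ → Ω → (Fin l → ℝ) // Admissible μ ℱ T K X 0 y0 h},
      ∀ ω : Ω, μ {ω} ≠ 0 → polValue μ ℱ T H X 0 π.1 ω ≤ ((T : ℝ) + 1) * C := by
    intro π ω hω
    have hb : ∀ᵐ ω' ∂μ,
        |(μ[(fun ω => ∑ s ∈ Finset.Icc 0 T, H s (π.1 s ω) (X s ω)) | ℱ 0]) ω'|
          ≤ ((⟨((T : ℝ) + 1) * C, by positivity⟩ : NNReal) : ℝ) := by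
      refine ae_bdd_condExp_of_ae_bdd (Filter.Eventually.of_forall fun ω' => ?_)
      calc |∑ s ∈ Finset.Icc 0 T, H s (π.1 s ω') (X s ω')|
          ≤ ∑ s ∈ Finset.Icc 0 T, |H s (π.1 s ω') (X s ω')| := Finset.abs_sum_le_sum_abs _ _
        _ ≤ ∑ s ∈ Finset.Icc 0 T, C := Finset.sum_le_sum fun s _ => hC _ _ _
        _ = ((T : ℝ) + 1) * C := by
            rw [Finset.sum_const, Nat.card_Icc, Nat.sub_zero, nsmul_eq_mul]
            push_cast
            ring
    exact le_trans (le_abs_self _) (ae_apply hb hω)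
  have hL := lower hX hC hG hBell hBellT piHat hmeas hgreedy hgreedyT T 0 (by omega)
  refine ⟨hadm, ?_⟩
  haveI : Nonempty {h : ℕ → Ω → (Fin l → ℝ) // Admissible μ ℱ T K X 0 y0 h} :=
    ⟨⟨piHat, hadm⟩⟩
  filter_upwards [ae_meas_singleton_ne_zero μ, hL] with ω hω hLω
  constructor
  · have hsup : valueFn μ ℱ T H K X 0 y0 ω ≤ V 0 y0 (X 0 ω) := ciSup_le fun π => hU π ω hω
    have hlow : V 0 (ctrl y0 piHat 0 0 ω) (X 0 ω) - ((T : ℝ) + 1) * ε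
        ≤ (μ[(fun ω => ∑ s ∈ Finset.Icc 0 T, H s (piHat s ω) (X s ω)) | ℱ 0]) ω := hLω
    rw [ctrl_zero_s15] at hlow
    have hpol : (μ[(fun ω => ∑ s ∈ Finset.Icc 0 T, H s (piHat s ω) (X s ω)) | ℱ 0]) ω
        = polValue μ ℱ T H X 0 piHat ω := rfl
    rw [hpol] at hlow
    push_cast
    linarith
  · have hbdd : BddAbove (Set.range
        fun π : {h : ℕ → Ω → (Fin l → ℝ) // Admissible μ ℱ T K X 0 y0 h} =>
          polValue μ ℱ T H X 0 π.1 ω) :=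
      ⟨((T : ℝ) + 1) * C, by rintro _ ⟨π, rfl⟩; exact hPB π ω hω⟩
    exact le_ciSup hbdd ⟨piHat, hadm⟩
end
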